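/- arXiv:0708.1084 — 7 statements merged into one kernel-verified Lean document; each statement's English description precedes it below -/
import Mathlib

section
/- Let A be a real n×n matrix and B a real n×d matrix. The rank condition Rank[B, AB, ..., A^{n-1}B] = n holds if and only if for every t > 0 the linear map L_t : L²([0,t]; ℝ^d) → ℝ^n given by L_t u = ∫₀ᵗ e^{sA} B u(s) ds is surjective. -/
open MeasureTheory Matrix Polynomial

lemma pow_mem_span (n : ℕ) (A : Matrix (Fin n) (Fin n) ℝ) (k : ℕ) :
    A ^ k ∈ Submodule.span ℝ (Set.range fun i : Fin n => A ^ (i : ℕ)) := by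
  rcases Nat.eq_zero_or_pos n with hn | hn
  · subst hn
    have : A ^ k = 0 := Subsingleton.elim _ _
    rw [this]; exact Submodule.zero_mem _
  · rw [Matrix.pow_eq_aeval_mod_charpoly]
    set q := X ^ k %ₘ A.charpoly with hq
    have hdeg : q.natDegree < n := by
      rcases eq_or_ne q 0 with h | h
      · simpa [h] using hn
      · have hd : q.degree < A.charpoly.degree :=
          Polynomial.degree_modByMonic_lt _ (A.charpoly_monic)
        have : A.charpoly.degree = (n : ℕ) := by
          haveI : Nontrivial ℝ := inferInstance
          rw [A.charpoly_degree_eq_dim]; simp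
        rw [this] at hd
        exact (Polynomial.natDegree_lt_iff_degree_lt h).2 hd
    rw [Polynomial.aeval_eq_sum_range' hdeg]
    apply Submodule.sum_mem
    intro i hi
    exact Submodule.smul_mem _ _ (Submodule.subset_span ⟨⟨i, Finset.mem_range.1 hi⟩, rfl⟩)

lemma leftker_all (n d : ℕ) (A : Matrix (Fin n) (Fin n) ℝ) (B : Matrix (Fin n) (Fin d) ℝ)
    (x : Fin n → ℝ) (hx : ∀ i : Fin n, x ᵥ* (A ^ (i : ℕ) * B) = 0) (k : ℕ) :
    x ᵥ* (A ^ k * B) = 0 := by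
  let φ : Matrix (Fin n) (Fin n) ℝ →ₗ[ℝ] (Fin d → ℝ) :=
    { toFun := fun M => x ᵥ* (M * B)
      map_add' := by intro M N; simp [Matrix.add_mul, Matrix.vecMul_add]
      map_smul' := by
        intro c M
        ext j
        simp [Matrix.smul_mul, Matrix.vecMul, dotProduct, Finset.mul_sum, mul_left_comm] }
  have hker : Submodule.span ℝ (Set.range fun i : Fin n => A ^ (i : ℕ)) ≤ LinearMap.ker φ := by
    rw [Submodule.span_le]
    rintro _ ⟨i, rfl⟩
    exact hx i
  exact hker (pow_mem_span n A k)

section KalmanAux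
attribute [local instance] Matrix.linftyOpNormedRing Matrix.linftyOpNormedAlgebra

open NormedSpace in
lemma leftker_exp (n d : ℕ) (A : Matrix (Fin n) (Fin n) ℝ) (B : Matrix (Fin n) (Fin d) ℝ)
    (x : Fin n → ℝ) (hx : ∀ i : Fin n, x ᵥ* (A ^ (i : ℕ) * B) = 0) (s : ℝ) :
    x ᵥ* (exp (s • A) * B) = 0 := by
  let φ : Matrix (Fin n) (Fin n) ℝ →ₗ[ℝ] (Fin d → ℝ) :=
    { toFun := fun M => x ᵥ* (M * B)
      map_add' := by intro M N; simp [Matrix.add_mul, Matrix.vecMul_add]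
      map_smul' := by
        intro c M
        ext j
        simp [Matrix.smul_mul, Matrix.vecMul, dotProduct, Finset.mul_sum, mul_left_comm] }
  let Φ := LinearMap.toContinuousLinearMap φ
  have h0 : ∀ k : ℕ, Φ (((Nat.factorial k : ℕ) : ℝ)⁻¹ • (s • A) ^ k) = 0 := by
    intro k
    have h1 : (s • A) ^ k = s ^ k • A ^ k := smul_pow s A k
    have h2 : φ (A ^ k) = 0 := leftker_all n d A B x hx k
    show φ (((Nat.factorial k : ℕ) : ℝ)⁻¹ • (s • A) ^ k) = 0
    rw [h1, _root_.map_smul, _root_.map_smul, h2]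
    simp
  have hsum : Summable fun k : ℕ => ((Nat.factorial k : ℕ) : ℝ)⁻¹ • (s • A) ^ k :=
    NormedSpace.expSeries_summable' (𝕂 := ℝ) (s • A)
  calc x ᵥ* (exp (s • A) * B) = Φ (exp (s • A)) := rfl
    _ = Φ (∑' k : ℕ, ((Nat.factorial k : ℕ) : ℝ)⁻¹ • (s • A) ^ k) := by rw [NormedSpace.exp_eq_tsum ℝ]
    _ = ∑' k : ℕ, Φ (((Nat.factorial k : ℕ) : ℝ)⁻¹ • (s • A) ^ k) := (Φ.map_tsum hsum)
    _ = 0 := by simp [h0]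

lemma rank_iff_leftker (n d : ℕ) (A : Matrix (Fin n) (Fin n) ℝ) (B : Matrix (Fin n) (Fin d) ℝ) :
    (Matrix.of fun (i : Fin n) (jk : Fin n × Fin d) =>
        (A ^ (jk.1 : ℕ) * B) i jk.2).rank = n ↔
      ∀ x : Fin n → ℝ, (∀ i : Fin n, x ᵥ* (A ^ (i : ℕ) * B) = 0) → x = 0 := by
  set K : Matrix (Fin n) (Fin n × Fin d) ℝ :=
    Matrix.of fun (i : Fin n) (jk : Fin n × Fin d) => (A ^ (jk.1 : ℕ) * B) i jk.2 with hK
  have hvm : ∀ x : Fin n → ℝ, (x ᵥ* K = 0 ↔ ∀ i : Fin n, x ᵥ* (A ^ (i : ℕ) * B) = 0) := by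
    intro x
    constructor
    · intro h i
      funext k
      have := congrFun h (i, k)
      simpa [Matrix.vecMul, dotProduct, hK] using this
    · intro h
      funext jk
      have := congrFun (h jk.1) jk.2
      simpa [Matrix.vecMul, dotProduct, hK] using this
  have h1 : K.rank = Kᵀ.rank := (Matrix.rank_transpose K).symm
  have h2 : Kᵀ.rank + Module.finrank ℝ (LinearMap.ker Kᵀ.mulVecLin) = n := by
    have := LinearMap.finrank_range_add_finrank_ker Kᵀ.mulVecLin
    simpa [Matrix.rank, Module.finrank_pi] using this
  constructor
  · intro hr x hx
    have hker : Module.finrank ℝ (LinearMap.ker Kᵀ.mulVecLin) = 0 := by omega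
    have hbot : LinearMap.ker Kᵀ.mulVecLin = ⊥ := Submodule.finrank_eq_zero.1 hker
    have hx0 : Kᵀ *ᵥ x = 0 := by
      rw [Matrix.mulVec_transpose]
      exact (hvm x).2 hx
    have : x ∈ LinearMap.ker Kᵀ.mulVecLin := hx0
    rw [hbot] at this
    simpa using this
  · intro h
    have hbot : LinearMap.ker Kᵀ.mulVecLin = ⊥ := by
      rw [LinearMap.ker_eq_bot']
      intro x hx
      apply h
      rw [← hvm x, ← Matrix.mulVec_transpose]
      exact hx
    rw [hbot] at h2
    simp only [finrank_bot] at h2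
    omega

open scoped RealInnerProductSpace

attribute [local instance] Matrix.linftyOpSeminormedAddCommGroup

noncomputable def TT (n d : ℕ) :
    Matrix (Fin n) (Fin d) ℝ →ₗ[ℝ] (EuclideanSpace ℝ (Fin d) →L[ℝ] EuclideanSpace ℝ (Fin n)) :=
  (LinearMap.toContinuousLinearMap.toLinearMap).comp Matrix.toEuclideanLin.toLinearMap

lemma TT_apply (n d : ℕ) (M : Matrix (Fin n) (Fin d) ℝ) (v : EuclideanSpace ℝ (Fin d)) :
    TT n d M v = Matrix.toEuclideanLin M v := rfl

lemma TT_cont (n d : ℕ) : Continuous (TT n d) :=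
  (TT n d).continuous_of_finiteDimensional

open NormedSpace in
lemma exp_cont (n : ℕ) (A : Matrix (Fin n) (Fin n) ℝ) :
    Continuous fun s : ℝ => exp (s • A) :=
  exp_continuous.comp (continuous_id.smul continuous_const)

open NormedSpace in
lemma expB_cont (n d : ℕ) (A : Matrix (Fin n) (Fin n) ℝ) (B : Matrix (Fin n) (Fin d) ℝ) :
    Continuous fun s : ℝ => exp (s • A) * B :=
  (exp_cont n A).matrix_mul continuous_const

open NormedSpace in
noncomputable def Gm (n d : ℕ) (A : Matrix (Fin n) (Fin n) ℝ) (B : Matrix (Fin n) (Fin d) ℝ)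
    (s : ℝ) : EuclideanSpace ℝ (Fin d) →L[ℝ] EuclideanSpace ℝ (Fin n) :=
  TT n d (exp (s • A) * B)

lemma Gm_cont (n d : ℕ) (A : Matrix (Fin n) (Fin n) ℝ) (B : Matrix (Fin n) (Fin d) ℝ) :
    Continuous (Gm n d A B) :=
  (TT_cont n d).comp (expB_cont n d A B)

lemma finmeas (t : ℝ) : IsFiniteMeasure (volume.restrict (Set.Icc (0:ℝ) t)) := by
  constructor
  rw [Measure.restrict_apply_univ]
  simp [Real.volume_Icc]

lemma integrable_Gm (n d : ℕ) (A : Matrix (Fin n) (Fin n) ℝ) (B : Matrix (Fin n) (Fin d) ℝ)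
    (t : ℝ) (u : Lp (EuclideanSpace ℝ (Fin d)) 2 (volume.restrict (Set.Icc 0 t))) :
    Integrable (fun s => Gm n d A B s (u s)) (volume.restrict (Set.Icc 0 t)) := by
  haveI := finmeas t
  obtain ⟨C, hC⟩ :=
    (isCompact_Icc (a := (0:ℝ)) (b := t)).exists_bound_of_continuousOn
      (Gm_cont n d A B).continuousOn
  have hu1 : Integrable (fun s => u s) (volume.restrict (Set.Icc 0 t)) :=
    (Lp.memLp u).integrable (by norm_num)
  have hmeas : AEStronglyMeasurable (fun s => Gm n d A B s (u s))
      (volume.restrict (Set.Icc 0 t)) := by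
    have h1 : AEStronglyMeasurable (fun s => (Gm n d A B s, (u : ℝ → EuclideanSpace ℝ (Fin d)) s))
        (volume.restrict (Set.Icc 0 t)) :=
      ((Gm_cont n d A B).aestronglyMeasurable).prodMk (Lp.aestronglyMeasurable u)
    exact isBoundedBilinearMap_apply.continuous.comp_aestronglyMeasurable h1
  refine Integrable.mono' (hu1.norm.const_mul C) hmeas ?_
  filter_upwards [ae_restrict_mem measurableSet_Icc] with s hs
  calc ‖Gm n d A B s (u s)‖ ≤ ‖Gm n d A B s‖ * ‖u s‖ := (Gm n d A B s).le_opNorm _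
    _ ≤ C * ‖u s‖ := by
        exact mul_le_mul_of_nonneg_right (hC s hs) (norm_nonneg _)

open NormedSpace in
noncomputable def Lmap (n d : ℕ) (A : Matrix (Fin n) (Fin n) ℝ) (B : Matrix (Fin n) (Fin d) ℝ)
    (t : ℝ) : Lp (EuclideanSpace ℝ (Fin d)) 2 (volume.restrict (Set.Icc 0 t)) →ₗ[ℝ]
      EuclideanSpace ℝ (Fin n) where
  toFun u := ∫ s in Set.Icc (0:ℝ) t, Gm n d A B s (u s)
  map_add' u v := by
    have h1 : (fun s => Gm n d A B s ((u + v : Lp _ 2 _) s))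
        =ᵐ[volume.restrict (Set.Icc 0 t)]
        fun s => Gm n d A B s (u s) + Gm n d A B s (v s) := by
      filter_upwards [Lp.coeFn_add u v] with s hs
      rw [hs]; simp
    rw [integral_congr_ae h1,
      integral_add (integrable_Gm n d A B t u) (integrable_Gm n d A B t v)]
  map_smul' c u := by
    have h1 : (fun s => Gm n d A B s ((c • u : Lp _ 2 _) s))
        =ᵐ[volume.restrict (Set.Icc 0 t)]
        fun s => c • Gm n d A B s (u s) := by
      filter_upwards [Lp.coeFn_smul c u] with s hs
      rw [hs]; simp
    rw [integral_congr_ae h1, integral_smul]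
    rfl

lemma inner_toEuclidean (n d : ℕ) (M : Matrix (Fin n) (Fin d) ℝ)
    (x : EuclideanSpace ℝ (Fin n)) (v : EuclideanSpace ℝ (Fin d)) :
    ⟪x, Matrix.toEuclideanLin M v⟫ = ((fun i => x i) ᵥ* M) ⬝ᵥ (fun j => v j) := by
  have h : ∀ i, Matrix.toEuclideanLin M v i = ∑ j, M i j * v j := fun i => rfl
  rw [PiLp.inner_apply]
  simp only [RCLike.inner_apply, starRingEnd_apply, star_trivial, h]
  rw [dotProduct]
  simp only [Matrix.vecMul, dotProduct, Finset.sum_mul, Finset.mul_sum]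
  rw [Finset.sum_comm]
  apply Finset.sum_congr rfl
  intro j _
  apply Finset.sum_congr rfl
  intro i _
  ring

open NormedSpace in
lemma surj_to_leftker (n d : ℕ) (A : Matrix (Fin n) (Fin n) ℝ) (B : Matrix (Fin n) (Fin d) ℝ)
    (t : ℝ) (ht : 0 < t)
    (hsurj : Function.Surjective
      (fun u : Lp (EuclideanSpace ℝ (Fin d)) 2 (volume.restrict (Set.Icc 0 t)) =>
        ∫ s in Set.Icc (0:ℝ) t, Matrix.toEuclideanLin (exp (s • A) * B) (u s)))
    (x : Fin n → ℝ) (hx : ∀ i : Fin n, x ᵥ* (A ^ (i : ℕ) * B) = 0) : x = 0 := by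
  haveI := finmeas t
  set xE : EuclideanSpace ℝ (Fin n) := (WithLp.equiv 2 _).symm x with hxE
  obtain ⟨u, hu⟩ := hsurj xE
  have key : ⟪xE, ∫ s in Set.Icc (0:ℝ) t, Gm n d A B s (u s)⟫ = 0 := by
    rw [← integral_inner (integrable_Gm n d A B t u) xE]
    have hz : ∀ s : ℝ, ⟪xE, Gm n d A B s (u s)⟫ = 0 := by
      intro s
      show ⟪xE, Matrix.toEuclideanLin (exp (s • A) * B) (u s)⟫ = 0
      rw [inner_toEuclidean]
      have hfe : (fun i => xE i) = x := rfl
      rw [hfe, leftker_exp n d A B x hx s]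
      exact zero_dotProduct _
    simp [hz]
  have h0 : ⟪xE, xE⟫ = 0 := by
    have h2 := congrArg (fun y : EuclideanSpace ℝ (Fin n) => ⟪xE, y⟫) hu.symm
    exact h2.trans key
  have hx0 : xE = 0 := by rwa [inner_self_eq_zero] at h0
  funext i
  exact congrFun (congrArg (fun y : EuclideanSpace ℝ (Fin n) => (y : Fin n → ℝ)) hx0) i

open NormedSpace in
noncomputable def Ck (n d : ℕ) (A : Matrix (Fin n) (Fin n) ℝ) (B : Matrix (Fin n) (Fin d) ℝ)
    (x : Fin n → ℝ) (k : ℕ) : Matrix (Fin n) (Fin n) ℝ →L[ℝ] (Fin d → ℝ) :=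
  LinearMap.toContinuousLinearMap
    { toFun := fun M => x ᵥ* (A ^ k * M * B)
      map_add' := by intro M N; simp [Matrix.mul_add, Matrix.add_mul, Matrix.vecMul_add]
      map_smul' := by
        intro c M
        ext j
        simp [Matrix.mul_smul, Matrix.smul_mul, Matrix.vecMul, dotProduct,
          Finset.mul_sum, mul_left_comm] }

open NormedSpace in
lemma vanish_deriv (n d : ℕ) (A : Matrix (Fin n) (Fin n) ℝ) (B : Matrix (Fin n) (Fin d) ℝ)
    (t : ℝ) (ht : 0 < t) (x : Fin n → ℝ)
    (h : ∀ s ∈ Set.Icc (0:ℝ) t, x ᵥ* (exp (s • A) * B) = 0) (k : ℕ) :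
    x ᵥ* (A ^ k * B) = 0 := by
  have hcont : ∀ m : ℕ, Continuous fun s : ℝ => Ck n d A B x m (exp (s • A)) :=
    fun m => (Ck n d A B x m).continuous.comp (exp_cont n A)
  have hder : ∀ (m : ℕ) (s : ℝ),
      HasDerivAt (fun σ : ℝ => Ck n d A B x m (exp (σ • A)))
        (Ck n d A B x (m + 1) (exp (s • A))) s := by
    intro m s
    have h1 : HasDerivAt (fun σ : ℝ => exp (σ • A)) (A * exp (s • A)) s :=
      hasDerivAt_exp_smul_const' A s
    have h2 := ((Ck n d A B x m).hasFDerivAt).comp_hasDerivAt s h1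
    convert h2 using 1
    show Ck n d A B x (m + 1) (exp (s • A)) = x ᵥ* (A ^ m * (A * exp (s • A)) * B)
    show x ᵥ* (A ^ (m + 1) * exp (s • A) * B) = x ᵥ* (A ^ m * (A * exp (s • A)) * B)
    rw [← mul_assoc, pow_succ]
    all_goals rfl
  have key : ∀ m : ℕ, Set.EqOn (fun s : ℝ => Ck n d A B x m (exp (s • A))) 0
      (Set.Icc 0 t) := by
    intro m
    induction m with
    | zero =>
      intro s hs
      show x ᵥ* (A ^ 0 * exp (s • A) * B) = 0
      rw [pow_zero, one_mul]
      exact h s hs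
    | succ m ih =>
      have hIoo : Set.EqOn (fun s : ℝ => Ck n d A B x (m + 1) (exp (s • A))) 0
          (Set.Ioo 0 t) := by
        intro s hs
        have hnhds : Set.Icc (0:ℝ) t ∈ nhds s := Icc_mem_nhds hs.1 hs.2
        have hev : (fun σ : ℝ => Ck n d A B x m (exp (σ • A))) =ᶠ[nhds s]
            (fun _ => (0 : Fin d → ℝ)) :=
          Filter.eventuallyEq_of_mem hnhds (fun σ hσ => ih hσ)
        have hzero : HasDerivAt (fun σ : ℝ => Ck n d A B x m (exp (σ • A)))
            (0 : Fin d → ℝ) s := by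
          rw [Filter.EventuallyEq.hasDerivAt_iff hev]
          exact hasDerivAt_const s 0
        exact (hder m s).unique hzero
      have := hIoo.closure (hcont (m + 1)) continuous_const
      rw [closure_Ioo ht.ne] at this
      exact fun s hs => this hs
  have h0 := key k ⟨le_refl 0, ht.le⟩
  have : Ck n d A B x k (exp ((0:ℝ) • A)) = x ᵥ* (A ^ k * B) := by
    rw [zero_smul, exp_zero]
    show x ᵥ* (A ^ k * 1 * B) = x ᵥ* (A ^ k * B)
    rw [mul_one]
  rw [← this]
  exact h0

set_option synthInstance.maxHeartbeats 1000000 in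
set_option maxHeartbeats 1000000 in
open NormedSpace in
lemma leftker_to_surj (n d : ℕ) (A : Matrix (Fin n) (Fin n) ℝ) (B : Matrix (Fin n) (Fin d) ℝ)
    (t : ℝ) (ht : 0 < t)
    (h : ∀ x : Fin n → ℝ, (∀ i : Fin n, x ᵥ* (A ^ (i : ℕ) * B) = 0) → x = 0) :
    Function.Surjective
      (fun u : Lp (EuclideanSpace ℝ (Fin d)) 2 (volume.restrict (Set.Icc 0 t)) =>
        ∫ s in Set.Icc (0:ℝ) t, Matrix.toEuclideanLin (exp (s • A) * B) (u s)) := by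
  haveI := finmeas t
  have hrange : LinearMap.range (Lmap n d A B t) = ⊤ := by
    by_contra hne
    have hoc : (LinearMap.range (Lmap n d A B t))ᗮ ≠ ⊥ := fun hbot =>
      hne (Submodule.orthogonal_eq_bot_iff.mp hbot)
    obtain ⟨xE, hxmem, hxne⟩ := Submodule.exists_mem_ne_zero_of_ne_bot hoc
    -- the candidate control
    set v : ℝ → EuclideanSpace ℝ (Fin d) :=
      fun s => Matrix.toEuclideanLin ((exp (s • A) * B)ᵀ) xE with hvdef
    have hvcont : Continuous v := by
      have h1 : Continuous fun s : ℝ => TT d n ((exp (s • A) * B)ᵀ) :=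
        (TT_cont d n).comp (expB_cont n d A B).matrix_transpose
      have h2 : Continuous fun s : ℝ => (TT d n ((exp (s • A) * B)ᵀ), xE) :=
        h1.prodMk continuous_const
      exact isBoundedBilinearMap_apply.continuous.comp h2
    obtain ⟨C, hC⟩ :=
      (isCompact_Icc (a := (0:ℝ)) (b := t)).exists_bound_of_continuousOn hvcont.continuousOn
    have hvmem : MemLp v 2 (volume.restrict (Set.Icc 0 t)) := by
      refine MemLp.of_bound hvcont.aestronglyMeasurable C ?_
      filter_upwards [ae_restrict_mem measurableSet_Icc] with s hs
      exact hC s hs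
    set u₀ := hvmem.toLp v with hu₀def
    have hcoe : (u₀ : ℝ → EuclideanSpace ℝ (Fin d)) =ᵐ[volume.restrict (Set.Icc 0 t)] v :=
      hvmem.coeFn_toLp
    -- the inner product vanishes
    have horto : ⟪xE, Lmap n d A B t u₀⟫ = 0 := by
      rw [real_inner_comm]
      exact (Submodule.mem_orthogonal _ xE).1 hxmem _ (LinearMap.mem_range_self _ u₀)
    set q : ℝ → ℝ := fun s => ⟪xE, Gm n d A B s (v s)⟫ with hqdef
    have hq0 : ∫ s in Set.Icc (0:ℝ) t, q s = 0 := by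
      have h1 : (fun s => ⟪xE, Gm n d A B s (u₀ s)⟫)
          =ᵐ[volume.restrict (Set.Icc 0 t)] q := by
        filter_upwards [hcoe] with s hs
        rw [hqdef]; dsimp only; rw [hs]
      rw [← integral_congr_ae h1, integral_inner (integrable_Gm n d A B t u₀) xE]
      exact horto
    -- q is a sum of squares
    have hqsq : ∀ s : ℝ, q s = ∑ j : Fin d,
        (((fun i => xE i) ᵥ* (exp (s • A) * B)) j) ^ 2 := by
      intro s
      have h1 : q s = ((fun i => xE i) ᵥ* (exp (s • A) * B)) ⬝ᵥ (fun j => v s j) := by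
        rw [hqdef]
        exact inner_toEuclidean n d _ xE (v s)
      have h2 : (fun j => v s j) = (fun i => xE i) ᵥ* (exp (s • A) * B) := by
        have : (fun j => v s j) = (exp (s • A) * B)ᵀ *ᵥ (fun i => xE i) := rfl
        rw [this, Matrix.mulVec_transpose]
      rw [h1, h2, dotProduct]
      exact Finset.sum_congr rfl fun j _ => (sq _).symm
    have hqnonneg : ∀ s, 0 ≤ q s := fun s => by
      rw [hqsq s]; exact Finset.sum_nonneg fun j _ => sq_nonneg _
    have hqcont : Continuous q := by
      have h2 : Continuous fun s : ℝ => (Gm n d A B s (v s)) := by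
        have := isBoundedBilinearMap_apply.continuous.comp
          ((Gm_cont n d A B).prodMk hvcont)
        exact this
      exact continuous_inner.comp (continuous_const.prodMk h2)
    have hqint : Integrable q (volume.restrict (Set.Icc 0 t)) :=
      hqcont.continuousOn.integrableOn_Icc
    have hae : q =ᵐ[volume.restrict (Set.Icc 0 t)] 0 :=
      (integral_eq_zero_iff_of_nonneg hqnonneg hqint).1 hq0
    have heq : Set.EqOn q 0 (Set.Icc 0 t) :=
      Measure.eqOn_Icc_of_ae_eq volume ht.ne hae hqcont.continuousOn continuousOn_const
    -- left kernel property on [0, t]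
    have hker : ∀ s ∈ Set.Icc (0:ℝ) t, (fun i => xE i) ᵥ* (exp (s • A) * B) = 0 := by
      intro s hs
      funext j
      have h1 : q s = 0 := heq hs
      rw [hqsq s] at h1
      have h2 := (Finset.sum_eq_zero_iff_of_nonneg
        (fun j _ => sq_nonneg (((fun i => xE i) ᵥ* (exp (s • A) * B)) j))).1 h1 j
        (Finset.mem_univ j)
      exact sq_eq_zero_iff.1 h2
    have hzero : (fun i => xE i) = (0 : Fin n → ℝ) :=
      h _ (fun i => vanish_deriv n d A B t ht _ hker (i : ℕ))
    apply hxne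
    ext i
    exact congrFun hzero i
  intro y
  obtain ⟨u, hu⟩ := (LinearMap.range_eq_top.1 hrange) y
  exact ⟨u, hu⟩

end KalmanAux

/-- The Kalman rank condition holds iff for every `t > 0` the control-to-state map
`L_t : L²([0,t]; ℝ^d) → ℝ^n`, `L_t u = ∫₀ᵗ e^{sA} B u(s) ds`, is surjective. -/
theorem rank_condition_iff_controllability
    (n d : ℕ) (A : Matrix (Fin n) (Fin n) ℝ) (B : Matrix (Fin n) (Fin d) ℝ) :
    (Matrix.of fun (i : Fin n) (jk : Fin n × Fin d) =>
        (A ^ (jk.1 : ℕ) * B) i jk.2).rank = n ↔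
      ∀ t : ℝ, 0 < t →
        Function.Surjective
          (fun u : Lp (EuclideanSpace ℝ (Fin d)) 2 (volume.restrict (Set.Icc 0 t)) =>
            ∫ s in Set.Icc (0:ℝ) t,
              Matrix.toEuclideanLin (NormedSpace.exp (s • A) * B) (u s)) := by
  rw [rank_iff_leftker n d A B]
  constructor
  · intro h t ht
    exact leftker_to_surj n d A B t ht h
  · intro h x hx
    exact surj_to_leftker n d A B 1 one_pos (h 1 one_pos) x hx
end

section
/- Let A be a real n×n matrix and B a real n×d matrix. The rank condition Rank[B, AB, ..., A^{n-1}B] = n holds if and only if for every t > 0 there exists C_t > 0 such that ∫₀ᵗ |B* e^{s A*} u|² ds ≥ C_t |u|² for all u ∈ ℝ^n. -/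
open MeasureTheory Matrix intervalIntegral

namespace KalmanAux

open Polynomial

variable {n d : ℕ}

/-- The linear map `X ↦ (C * X) *ᵥ u`. -/
noncomputable def mulMulVecLin (C : Matrix (Fin d) (Fin n) ℝ) (u : Fin n → ℝ) :
    Matrix (Fin n) (Fin n) ℝ →ₗ[ℝ] (Fin d → ℝ) where
  toFun X := (C * X) *ᵥ u
  map_add' X Y := by
    show (C * (X + Y)) *ᵥ u = (C * X) *ᵥ u + (C * Y) *ᵥ u
    rw [Matrix.mul_add, Matrix.add_mulVec]
  map_smul' c X := by
    show (C * (c • X)) *ᵥ u = c • ((C * X) *ᵥ u)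
    rw [Matrix.mul_smul, Matrix.smul_mulVec]

lemma all_pow_obs (A : Matrix (Fin n) (Fin n) ℝ) (B : Matrix (Fin n) (Fin d) ℝ)
    (u : Fin n → ℝ) (h : ∀ j : Fin n, (Bᵀ * A ^ (j : ℕ)) *ᵥ u = 0) :
    ∀ k : ℕ, (Bᵀ * A ^ k) *ᵥ u = 0 := by
  intro k
  rcases Nat.eq_zero_or_pos n with hn | hn
  · subst hn
    funext j
    simp [Matrix.mulVec, dotProduct]
  · by_cases hkn : k < n
    · exact h ⟨k, hkn⟩
    have hmon := Matrix.charpoly_monic A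
    have hdeg : (Matrix.charpoly A).natDegree = n := by
      simp [A.charpoly_natDegree_eq_dim]
    have hne1 : Matrix.charpoly A ≠ 1 := by
      intro h1; rw [h1] at hdeg; simp at hdeg; omega
    have hAk : A ^ k = aeval A ((X : ℝ[X]) ^ k %ₘ Matrix.charpoly A) := by
      conv_lhs => rw [show A ^ k = aeval A ((X : ℝ[X]) ^ k) by simp]
      conv_lhs => rw [← Polynomial.modByMonic_add_div ((X : ℝ[X]) ^ k) (Matrix.charpoly A)]
      rw [map_add, _root_.map_mul, Matrix.aeval_self_charpoly, zero_mul, add_zero]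
    have hlt : ((X : ℝ[X]) ^ k %ₘ Matrix.charpoly A).natDegree < n := by
      have := Polynomial.natDegree_modByMonic_lt ((X : ℝ[X]) ^ k) hmon hne1
      omega
    show mulMulVecLin Bᵀ u (A ^ k) = 0
    rw [hAk, Polynomial.aeval_eq_sum_range' hlt, map_sum]
    apply Finset.sum_eq_zero
    intro i hi
    rw [_root_.map_smul]
    have : mulMulVecLin Bᵀ u (A ^ i) = (Bᵀ * A ^ i) *ᵥ u := rfl
    rw [this, h ⟨i, Finset.mem_range.mp hi⟩, smul_zero]

lemma kalman_rank_iff (A : Matrix (Fin n) (Fin n) ℝ) (B : Matrix (Fin n) (Fin d) ℝ) :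
    (Matrix.of fun (i : Fin n) (jk : Fin n × Fin d) =>
        (A ^ (jk.1 : ℕ) * B) i jk.2).rank = n ↔
      ∀ u : Fin n → ℝ, (∀ j : Fin n, (Bᵀ * Aᵀ ^ (j : ℕ)) *ᵥ u = 0) → u = 0 := by
  set K := Matrix.of fun (i : Fin n) (jk : Fin n × Fin d) => (A ^ (jk.1 : ℕ) * B) i jk.2 with hK
  have hmv : ∀ u : Fin n → ℝ, (Kᵀ *ᵥ u = 0 ↔ ∀ j : Fin n, (Bᵀ * Aᵀ ^ (j : ℕ)) *ᵥ u = 0) := by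
    intro u
    constructor
    · intro h j
      funext k
      have := congrFun h (j, k)
      simpa [hK, Matrix.mulVec, dotProduct, Matrix.mul_apply, Matrix.transpose_apply,
        ← Matrix.transpose_pow, mul_comm, mul_left_comm, mul_assoc] using this
    · intro h
      funext jk
      obtain ⟨j, k⟩ := jk
      have := congrFun (h j) k
      simpa [hK, Matrix.mulVec, dotProduct, Matrix.mul_apply, Matrix.transpose_apply,
        ← Matrix.transpose_pow, mul_comm, mul_left_comm, mul_assoc] using this
  rw [← Matrix.rank_transpose]
  rw [Matrix.rank]
  constructor
  · intro hr u hu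
    have hker : LinearMap.ker (Kᵀ).mulVecLin = ⊥ := by
      have := (Kᵀ).mulVecLin.finrank_range_add_finrank_ker
      rw [hr] at this
      simp only [Module.finrank_pi, Fintype.card_fin] at this
      have h0 : Module.finrank ℝ (LinearMap.ker (Kᵀ).mulVecLin) = 0 := by omega
      exact Submodule.finrank_eq_zero.mp h0
    have hz : (Kᵀ).mulVecLin u = 0 := by
      rw [Matrix.mulVecLin_apply]
      exact (hmv u).mpr hu
    exact LinearMap.ker_eq_bot'.mp hker u hz
  · intro h
    have hker : LinearMap.ker (Kᵀ).mulVecLin = ⊥ := by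
      rw [LinearMap.ker_eq_bot']
      intro u hu
      exact h u ((hmv u).mp (by rw [← Matrix.mulVecLin_apply]; exact hu))
    have := (Kᵀ).mulVecLin.finrank_range_add_finrank_ker
    rw [hker] at this
    simpa using this

lemma exp_cont (A : Matrix (Fin n) (Fin n) ℝ) :
    Continuous fun s : ℝ => NormedSpace.exp (s • A) := by
  letI : SeminormedRing (Matrix (Fin n) (Fin n) ℝ) := Matrix.linftyOpSemiNormedRing
  letI : NormedRing (Matrix (Fin n) (Fin n) ℝ) := Matrix.linftyOpNormedRing
  letI : NormedAlgebra ℝ (Matrix (Fin n) (Fin n) ℝ) := Matrix.linftyOpNormedAlgebra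
  exact continuous_iff_continuousAt.2 fun s => (hasDerivAt_exp_smul_const' (𝕂 := ℝ) A s).continuousAt

lemma exp_obs_zero (A : Matrix (Fin n) (Fin n) ℝ) (s : ℝ) (B : Matrix (Fin n) (Fin d) ℝ)
    (u : Fin n → ℝ) (h : ∀ k : ℕ, (Bᵀ * A ^ k) *ᵥ u = 0) :
    (Bᵀ * NormedSpace.exp (s • A)) *ᵥ u = 0 := by
  letI : SeminormedRing (Matrix (Fin n) (Fin n) ℝ) := Matrix.linftyOpSemiNormedRing
  letI : NormedRing (Matrix (Fin n) (Fin n) ℝ) := Matrix.linftyOpNormedRing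
  letI : NormedAlgebra ℝ (Matrix (Fin n) (Fin n) ℝ) := Matrix.linftyOpNormedAlgebra
  have hL : Continuous (mulMulVecLin Bᵀ u) :=
    (mulMulVecLin Bᵀ u).continuous_of_finiteDimensional
  have hmap := ContinuousLinearMap.map_tsum ⟨mulMulVecLin Bᵀ u, hL⟩
    (NormedSpace.expSeries_summable' (𝕂 := ℝ) (s • A))
  show mulMulVecLin Bᵀ u (NormedSpace.exp (s • A)) = 0
  rw [NormedSpace.exp_eq_tsum (𝕂 := ℝ)]
  have hz : ∀ k : ℕ, mulMulVecLin Bᵀ u (((k.factorial : ℝ))⁻¹ • (s • A) ^ k) = 0 := by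
    intro k
    have hk : mulMulVecLin Bᵀ u (A ^ k) = (Bᵀ * A ^ k) *ᵥ u := rfl
    rw [_root_.map_smul, _root_.smul_pow, _root_.map_smul, hk, h k, smul_zero, smul_zero]
  calc mulMulVecLin Bᵀ u (∑' k : ℕ, ((k.factorial : ℝ))⁻¹ • (s • A) ^ k)
      = ∑' k : ℕ, mulMulVecLin Bᵀ u (((k.factorial : ℝ))⁻¹ • (s • A) ^ k) := hmap
    _ = 0 := by simp only [hz, tsum_zero]

lemma vanish_on_interval (A : Matrix (Fin n) (Fin n) ℝ) (B : Matrix (Fin n) (Fin d) ℝ)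
    (u : Fin n → ℝ) {t : ℝ} (ht : 0 < t)
    (h0 : ∀ s ∈ Set.Icc (0:ℝ) t, (Bᵀ * NormedSpace.exp (s • A)) *ᵥ u = 0) :
    ∀ k : ℕ, (Bᵀ * A ^ k) *ᵥ u = 0 := by
  letI : SeminormedRing (Matrix (Fin n) (Fin n) ℝ) := Matrix.linftyOpSemiNormedRing
  letI : NormedRing (Matrix (Fin n) (Fin n) ℝ) := Matrix.linftyOpNormedRing
  letI : NormedAlgebra ℝ (Matrix (Fin n) (Fin n) ℝ) := Matrix.linftyOpNormedAlgebra
  set w : ℕ → ℝ → (Fin d → ℝ) := fun k s =>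
    mulMulVecLin Bᵀ u (A ^ k * NormedSpace.exp (s • A)) with hw
  have hexpc : Continuous fun s : ℝ => NormedSpace.exp (s • A) :=
    continuous_iff_continuousAt.2 fun s => (hasDerivAt_exp_smul_const' (𝕂 := ℝ) A s).continuousAt
  have hwc : ∀ k, Continuous (w k) := by
    intro k
    exact ((mulMulVecLin Bᵀ u).continuous_of_finiteDimensional).comp
      ((continuous_const.matrix_mul hexpc))
  have hderiv : ∀ (k : ℕ) (s : ℝ), HasDerivAt (w k) (w (k+1) s) s := by
    intro k s
    have h1 : HasDerivAt (fun s : ℝ => NormedSpace.exp (s • A))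
        (A * NormedSpace.exp (s • A)) s := hasDerivAt_exp_smul_const' A s
    have h2 : HasDerivAt (fun s : ℝ => A ^ k * NormedSpace.exp (s • A))
        (A ^ k * (A * NormedSpace.exp (s • A))) s := h1.const_mul (A ^ k)
    have h3 : HasDerivAt (w k)
        ((mulMulVecLin Bᵀ u) (A ^ k * (A * NormedSpace.exp (s • A)))) s :=
      ((mulMulVecLin Bᵀ u).toContinuousLinearMap.hasFDerivAt).comp_hasDerivAt s h2
    have he : (mulMulVecLin Bᵀ u) (A ^ k * (A * NormedSpace.exp (s • A))) = w (k+1) s := by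
      rw [hw]; dsimp only
      rw [← mul_assoc, ← pow_succ]
    rw [he] at h3
    exact h3
  have hvan : ∀ k : ℕ, Set.EqOn (w k) 0 (Set.Icc 0 t) := by
    intro k
    induction k with
    | zero =>
      intro s hs
      have := h0 s hs
      show mulMulVecLin Bᵀ u (A ^ 0 * NormedSpace.exp (s • A)) = 0
      rw [pow_zero, one_mul]
      exact this
    | succ k ih =>
      have hIoo : Set.EqOn (w (k+1)) 0 (Set.Ioo 0 t) := by
        intro s hs
        have hev : w k =ᶠ[nhds s] 0 := by
          filter_upwards [Ioo_mem_nhds hs.1 hs.2] with x hx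
          exact ih (Set.Ioo_subset_Icc_self hx)
        have hd : deriv (w k) s = w (k+1) s := (hderiv k s).deriv
        have hz : deriv (w k) s = 0 := by
          rw [Filter.EventuallyEq.deriv_eq hev]
          exact deriv_const s 0
        rw [hd] at hz
        exact hz
      have := hIoo.closure (hwc (k+1)) continuous_const
      rwa [closure_Ioo ht.ne] at this
  intro k
  have h1 := hvan k (Set.left_mem_Icc.mpr ht.le)
  have h2 : mulMulVecLin Bᵀ u (A ^ k * NormedSpace.exp ((0:ℝ) • A)) = 0 := h1
  rwa [zero_smul, NormedSpace.exp_zero, mul_one] at h2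

lemma norm_sq_eq (N : Matrix (Fin d) (Fin n) ℝ) (u : EuclideanSpace ℝ (Fin n)) :
    ‖Matrix.toEuclideanLin N u‖ ^ 2
      = ∑ k : Fin d, ((N *ᵥ (WithLp.equiv 2 (Fin n → ℝ) u)) k) ^ 2 := by
  rw [EuclideanSpace.norm_eq, Real.sq_sqrt (by positivity)]
  refine Finset.sum_congr rfl fun k _ => ?_
  rw [Real.norm_eq_abs, sq_abs]
  rfl

lemma integrand_cont (A : Matrix (Fin n) (Fin n) ℝ) (B : Matrix (Fin n) (Fin d) ℝ) :
    Continuous fun p : EuclideanSpace ℝ (Fin n) × ℝ =>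
      ‖Matrix.toEuclideanLin (Bᵀ * NormedSpace.exp (p.2 • Aᵀ)) p.1‖ ^ 2 := by
  have hrw : (fun p : EuclideanSpace ℝ (Fin n) × ℝ =>
      ‖Matrix.toEuclideanLin (Bᵀ * NormedSpace.exp (p.2 • Aᵀ)) p.1‖ ^ 2)
      = fun p => ∑ k : Fin d, (∑ i : Fin n,
          (Bᵀ * NormedSpace.exp (p.2 • Aᵀ)) k i * (WithLp.equiv 2 (Fin n → ℝ) p.1) i) ^ 2 := by
    funext p
    rw [norm_sq_eq]
    rfl
  rw [hrw]
  have hG : Continuous fun s : ℝ => Bᵀ * NormedSpace.exp (s • Aᵀ) :=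
    continuous_const.matrix_mul (exp_cont Aᵀ)
  refine continuous_finset_sum _ fun k _ => (Continuous.pow ?_ 2)
  refine continuous_finset_sum _ fun i _ => Continuous.mul ?_ ?_
  · exact ((continuous_apply i).comp ((continuous_apply k).comp hG)).comp continuous_snd
  · exact (continuous_apply i).comp ((PiLp.continuous_ofLp 2 (fun _ : Fin n => ℝ)).comp
      continuous_fst)

end KalmanAux

open KalmanAux

/-- The Kalman rank condition holds iff for every `t > 0` there is `C_t > 0` with
`∫₀ᵗ ‖B* e^{sA*} u‖² ds ≥ C_t ‖u‖²` for all `u ∈ ℝⁿ`. -/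
theorem rank_condition_iff_observability_inequality
    (n d : ℕ) (A : Matrix (Fin n) (Fin n) ℝ) (B : Matrix (Fin n) (Fin d) ℝ) :
    (Matrix.of fun (i : Fin n) (jk : Fin n × Fin d) =>
        (A ^ (jk.1 : ℕ) * B) i jk.2).rank = n ↔
      ∀ t : ℝ, 0 < t → ∃ C : ℝ, 0 < C ∧
        ∀ u : EuclideanSpace ℝ (Fin n),
          C * ‖u‖ ^ 2 ≤
            ∫ s in (0:ℝ)..t,
              ‖Matrix.toEuclideanLin (Bᵀ * NormedSpace.exp (s • Aᵀ)) u‖ ^ 2 := by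
  rw [kalman_rank_iff A B]
  constructor
  · intro hrank t ht
    by_cases htriv : ∀ u : EuclideanSpace ℝ (Fin n), u = 0
    · refine ⟨1, one_pos, fun u => ?_⟩
      rw [htriv u]
      have h1 : (1:ℝ) * ‖(0 : EuclideanSpace ℝ (Fin n))‖ ^ 2 = 0 := by simp
      rw [h1]
      exact intervalIntegral.integral_nonneg ht.le fun s _ => by positivity
    · push_neg at htriv
      obtain ⟨u₀, hu₀⟩ := htriv
      set F : EuclideanSpace ℝ (Fin n) → ℝ := fun u => ∫ s in (0:ℝ)..t,
        ‖Matrix.toEuclideanLin (Bᵀ * NormedSpace.exp (s • Aᵀ)) u‖ ^ 2 with hF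
      have hFc : Continuous F := by
        apply intervalIntegral.continuous_parametric_intervalIntegral_of_continuous'
          (μ := volume) (f := fun (u : EuclideanSpace ℝ (Fin n)) (s : ℝ) =>
            ‖Matrix.toEuclideanLin (Bᵀ * NormedSpace.exp (s • Aᵀ)) u‖ ^ 2)
        exact integrand_cont A B
      have hpos : ∀ u : EuclideanSpace ℝ (Fin n), u ≠ 0 → 0 < F u := by
        intro u hu
        refine intervalIntegral.integral_pos ht ?_ (fun s _ => by positivity) ?_
        · exact ((integrand_cont A B).comp (continuous_const.prodMk continuous_id)).continuousOn
        · by_contra hne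
          push_neg at hne
          have hz : ∀ s ∈ Set.Icc (0:ℝ) t,
              (Bᵀ * NormedSpace.exp (s • Aᵀ)) *ᵥ (WithLp.equiv 2 (Fin n → ℝ) u) = 0 := by
            intro s hs
            have hle := hne s hs
            have hge : (0:ℝ) ≤
                ‖Matrix.toEuclideanLin (Bᵀ * NormedSpace.exp (s • Aᵀ)) u‖ ^ 2 := by positivity
            have h0 : ‖Matrix.toEuclideanLin (Bᵀ * NormedSpace.exp (s • Aᵀ)) u‖ ^ 2 = 0 := by
              linarith
            have h1 : Matrix.toEuclideanLin (Bᵀ * NormedSpace.exp (s • Aᵀ)) u = 0 := by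
              rw [pow_eq_zero_iff (two_ne_zero)] at h0
              exact norm_eq_zero.mp h0
            have h2 := congrArg (WithLp.equiv 2 (Fin d → ℝ)) h1
            rw [WithLp.equiv_apply, Matrix.ofLp_toEuclideanLin_apply] at h2
            simpa using h2
          have hall := vanish_on_interval Aᵀ B (WithLp.equiv 2 (Fin n → ℝ) u) ht hz
          have hzero : WithLp.equiv 2 (Fin n → ℝ) u = 0 :=
            hrank _ (fun j => hall (j : ℕ))
          apply hu
          have := congrArg (WithLp.equiv 2 (Fin n → ℝ)).symm hzero
          simpa using this
      obtain ⟨w, hwmem, hwmin⟩ := (isCompact_sphere (0 : EuclideanSpace ℝ (Fin n)) 1).exists_isMinOn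
        ⟨_, mem_sphere_zero_iff_norm.mpr (norm_smul_inv_norm (𝕜 := ℝ) hu₀)⟩ hFc.continuousOn
      have hw1 : ‖w‖ = 1 := mem_sphere_zero_iff_norm.mp hwmem
      have hCpos : 0 < F w := hpos w (by intro h; rw [h] at hw1; simp at hw1)
      refine ⟨F w, hCpos, fun u => ?_⟩
      by_cases hu : u = 0
      · rw [hu]
        have h1 : F w * ‖(0 : EuclideanSpace ℝ (Fin n))‖ ^ 2 = 0 := by simp
        rw [h1]
        exact intervalIntegral.integral_nonneg ht.le fun s _ => by positivity
      · have hun : ‖u‖ ≠ 0 := norm_ne_zero_iff.mpr hu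
        have hhom : ∀ (c : ℝ) (v : EuclideanSpace ℝ (Fin n)), F (c • v) = c ^ 2 * F v := by
          intro c v
          rw [hF]
          dsimp only
          rw [← intervalIntegral.integral_const_mul]
          refine intervalIntegral.integral_congr fun s _ => ?_
          rw [_root_.map_smul, norm_smul, mul_pow, Real.norm_eq_abs, sq_abs]
        have hsc : F u = ‖u‖ ^ 2 * F (‖u‖⁻¹ • u) := by
          have hrec : (‖u‖ : ℝ) • (‖u‖⁻¹ • u) = u := by
            rw [smul_smul, mul_inv_cancel₀ hun, one_smul]
          conv_lhs => rw [← hrec]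
          exact hhom _ _
        have hmem : ‖u‖⁻¹ • u ∈ Metric.sphere (0 : EuclideanSpace ℝ (Fin n)) 1 :=
          mem_sphere_zero_iff_norm.mpr (norm_smul_inv_norm (𝕜 := ℝ) hu)
        have hmin : F w ≤ F (‖u‖⁻¹ • u) := hwmin hmem
        have hfinal : F w * ‖u‖ ^ 2 ≤ F u := by
          rw [hsc]
          calc F w * ‖u‖ ^ 2 ≤ F (‖u‖⁻¹ • u) * ‖u‖ ^ 2 :=
                mul_le_mul_of_nonneg_right hmin (by positivity)
            _ = ‖u‖ ^ 2 * F (‖u‖⁻¹ • u) := mul_comm _ _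
        exact hfinal
  · intro h u hu
    rcases h 1 one_pos with ⟨C, hC, hineq⟩
    by_contra hu0
    have hall := all_pow_obs Aᵀ B u hu
    have hexp : ∀ s : ℝ, (Bᵀ * NormedSpace.exp (s • Aᵀ)) *ᵥ u = 0 :=
      fun s => exp_obs_zero Aᵀ s B u hall
    have hI := hineq ((WithLp.equiv 2 (Fin n → ℝ)).symm u)
    have hzero : (fun s : ℝ => ‖Matrix.toEuclideanLin (Bᵀ * NormedSpace.exp (s • Aᵀ))
        ((WithLp.equiv 2 (Fin n → ℝ)).symm u)‖ ^ 2) = fun _ => 0 := by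
      funext s
      rw [WithLp.equiv_symm_apply, Matrix.toEuclideanLin_apply_piLp_toLp, hexp s]
      simp
    rw [hzero, intervalIntegral.integral_const, smul_zero] at hI
    have hne : (WithLp.equiv 2 (Fin n → ℝ)).symm u ≠ 0 := by
      intro h0
      apply hu0
      have := congrArg (WithLp.equiv 2 (Fin n → ℝ)) h0
      simpa using this
    have hpos := mul_pos hC (pow_pos (norm_pos_iff.mpr hne) 2)
    linarith
end

section
/- Let A be a real n×n matrix and B a real n×d matrix satisfying the rank condition Rank[B, AB, ..., A^{n-1}B] = n. Then there exists T₀ > 0 (depending only on n and the eigenvalues of A) such that for every integer m ≥ n+1 and all times 0 ≤ s₁ < s₂ < ... < s_m ≤ T₀, the linear map l : ℝ^{dm} → ℝ^n defined by l(y₁,...,y_m) = Σ_{j=1}^m e^{s_j A} B y_j is surjective. -/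
open Matrix

attribute [local instance] Matrix.linftyOpNormedAddCommGroup Matrix.linftyOpNormedRing
  Matrix.linftyOpNormedAlgebra

/-- Iterated Rolle's theorem for a family of functions where each is the derivative of
the previous one. -/
private lemma rolle_family : ∀ (k : ℕ) (g : ℕ → ℝ → ℝ),
    (∀ j t, HasDerivAt (g j) (g (j+1) t) t) →
    ∀ s : Fin (k+1) → ℝ, StrictMono s → (∀ i, g 0 (s i) = 0) →
    ∃ ξ ∈ Set.Icc (s 0) (s (Fin.last k)), g k ξ = 0 := by
  intro k
  induction k with
  | zero =>
    intro g hg s hs h0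
    exact ⟨s 0, ⟨le_refl _, le_of_eq rfl⟩, h0 0⟩
  | succ k ih =>
    intro g hg s hs h0
    have key : ∀ i : Fin (k+1), ∃ c ∈ Set.Ioo (s i.castSucc) (s i.succ), g 1 c = 0 := by
      intro i
      exact exists_hasDerivAt_eq_zero (hs (Fin.castSucc_lt_succ (i := i)))
        (fun t _ => (hg 0 t).continuousAt.continuousWithinAt)
        ((h0 i.castSucc).trans (h0 i.succ).symm)
        (fun t _ => hg 0 t)
    choose t ht hgt using key
    have hts : StrictMono t := by
      rw [Fin.strictMono_iff_lt_succ]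
      intro i
      calc t i.castSucc < s i.castSucc.succ := (ht i.castSucc).2
        _ = s i.succ.castSucc := by rw [Fin.succ_castSucc]
        _ < t i.succ := (ht i.succ).1
    obtain ⟨ξ, hξ, hgξ⟩ := ih (fun j => g (j+1)) (fun j t => hg (j+1) t) t hts hgt
    refine ⟨ξ, ⟨?_, ?_⟩, hgξ⟩
    · exact le_trans (le_of_lt (ht 0).1) hξ.1
    · exact le_trans hξ.2 (le_of_lt ((ht (Fin.last k)).2.trans_le (le_of_eq (by rw [Fin.succ_last]))))

/-- Derivative of `t ↦ ⟨x, e^{tA} v⟩`. -/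
private lemma hasDerivAt_dot_exp {n : ℕ} (A : Matrix (Fin n) (Fin n) ℝ) (x v : Fin n → ℝ)
    (t : ℝ) :
    HasDerivAt (fun t => x ⬝ᵥ (NormedSpace.exp (t • A) *ᵥ v))
      (x ⬝ᵥ (NormedSpace.exp (t • A) *ᵥ (A *ᵥ v))) t := by
  have h1 : HasDerivAt (fun t : ℝ => NormedSpace.exp (t • A))
      (NormedSpace.exp (t • A) * A) t := hasDerivAt_exp_smul_const A t
  let Lv : Matrix (Fin n) (Fin n) ℝ →ₗ[ℝ] ℝ :=
    { toFun := fun M => x ⬝ᵥ (M *ᵥ v)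
      map_add' := by intro M N; simp [Matrix.add_mulVec, dotProduct_add]
      map_smul' := by intro c M; simp [Matrix.smul_mulVec, dotProduct_smul] }
  have h2 := (LinearMap.toContinuousLinearMap Lv).hasFDerivAt.comp_hasDerivAt t h1
  have he : ((LinearMap.toContinuousLinearMap Lv) ∘ fun t : ℝ => NormedSpace.exp (t • A))
      = fun t => x ⬝ᵥ (NormedSpace.exp (t • A) *ᵥ v) := rfl
  have hd : (LinearMap.toContinuousLinearMap Lv) (NormedSpace.exp (t • A) * A)
      = x ⬝ᵥ (NormedSpace.exp (t • A) *ᵥ (A *ᵥ v)) := by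
    show x ⬝ᵥ ((NormedSpace.exp (t • A) * A) *ᵥ v) = _
    rw [Matrix.mulVec_mulVec]
  rw [he] at h2
  exact h2.congr_deriv hd

/-- Under the Kalman rank condition there is `T₀ > 0` such that for every `m ≥ n+1`
and all times `0 ≤ s₁ < ⋯ < s_m ≤ T₀` the map
`(y₁,…,y_m) ↦ ∑ⱼ e^{sⱼA} B yⱼ` from `ℝ^{dm}` to `ℝⁿ` is surjective. -/
theorem surjectivity_of_sum_exponential_maps
    (n d : ℕ) (A : Matrix (Fin n) (Fin n) ℝ) (B : Matrix (Fin n) (Fin d) ℝ)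
    (hrank : (Matrix.of fun (i : Fin n) (jk : Fin n × Fin d) =>
        (A ^ (jk.1 : ℕ) * B) i jk.2).rank = n) :
    ∃ T₀ : ℝ, 0 < T₀ ∧
      ∀ m : ℕ, n + 1 ≤ m → ∀ s : Fin m → ℝ, StrictMono s →
        (∀ j, s j ∈ Set.Icc (0:ℝ) T₀) →
        Function.Surjective
          (fun y : Fin m → EuclideanSpace ℝ (Fin d) =>
            ∑ j, Matrix.toEuclideanLin (NormedSpace.exp (s j • A) * B) (y j)) := by
  classical
  set M := (Matrix.of fun (i : Fin n) (jk : Fin n × Fin d) =>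
        (A ^ (jk.1 : ℕ) * B) i jk.2) with hM
  -- the vectors A^k B e_c
  set w : Fin n × Fin d → (Fin n → ℝ) :=
    fun p => (A ^ (p.1 : ℕ)) *ᵥ (B *ᵥ Pi.single p.2 1) with hw
  -- the "observability" linear map
  let P : (Fin n → ℝ) →ₗ[ℝ] (Fin n × Fin d → ℝ) :=
    { toFun := fun x => fun p => x ⬝ᵥ w p
      map_add' := by intro a b; funext p; simp [add_dotProduct]
      map_smul' := by intro c a; funext p; simp [smul_dotProduct] }
  have hPker : LinearMap.ker P = ⊥ := by
    rw [LinearMap.ker_eq_bot']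
    intro x hx
    have hxp : ∀ p : Fin n × Fin d, x ⬝ᵥ w p = 0 := fun p => congrFun hx p
    have hker : x ∈ LinearMap.ker Mᵀ.mulVecLin := by
      simp only [LinearMap.mem_ker, Matrix.mulVecLin_apply]
      funext p
      have := hxp p
      rw [hw] at this
      simp only [← Matrix.mulVec_mulVec] at this
      simp only [Matrix.mulVec, dotProduct, transpose_apply, hM, Matrix.of_apply,
        Pi.zero_apply]
      rw [← this]
      simp only [dotProduct, Matrix.mulVec, Pi.single_apply, mul_ite, mul_zero,
        mul_one, Finset.sum_ite_eq', Finset.mem_univ, if_true]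
      exact Finset.sum_congr rfl fun i _ => mul_comm _ _
    have hrt : Mᵀ.rank = n := by rw [Matrix.rank_transpose]; exact hrank
    have hkb : LinearMap.ker Mᵀ.mulVecLin = ⊥ := by
      have h1 := LinearMap.finrank_range_add_finrank_ker Mᵀ.mulVecLin
      have h2 : Module.finrank ℝ (Fin n → ℝ) = n := by simp
      rw [h2] at h1
      have h3 : Mᵀ.rank = Module.finrank ℝ (LinearMap.range Mᵀ.mulVecLin) := rfl
      have h5 : Module.finrank ℝ (LinearMap.range Mᵀ.mulVecLin) = n := h3.symm.trans hrt
      rw [h5] at h1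
      have h4 : Module.finrank ℝ (LinearMap.ker Mᵀ.mulVecLin) = 0 := by omega
      exact Submodule.finrank_eq_zero.mp h4
    rw [hkb] at hker
    exact Submodule.mem_bot ℝ |>.mp hker
  obtain ⟨K, hK0, hKa⟩ := P.exists_antilipschitzWith hPker
  have hKR : (0:ℝ) ≤ (K:ℝ) := K.coe_nonneg
  set ε : ℝ := (2 * ((K:ℝ)+1) * (n+1))⁻¹ with hε
  have hεpos : 0 < ε := by positivity
  -- choose T₀ by continuity of t ↦ e^{tA}
  let G : Matrix (Fin n) (Fin n) ℝ →ₗ[ℝ] ((Fin n × Fin d) → (Fin n → ℝ)) :=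
    { toFun := fun N => fun p => N *ᵥ w p
      map_add' := by intro a b; funext p; simp [Matrix.add_mulVec]
      map_smul' := by intro c a; funext p; simp [Matrix.smul_mulVec]  }
  let F : ℝ → (Fin n × Fin d) → (Fin n → ℝ) :=
    fun t => (fun p => w p) - G (NormedSpace.exp (t • A))
  have hE : Continuous (fun t : ℝ => NormedSpace.exp (t • A)) :=
    NormedSpace.exp_continuous.comp (continuous_id.smul continuous_const)
  have hFcont : Continuous F :=
    continuous_const.sub (G.continuous_of_finiteDimensional.comp hE)
  have hF0 : F 0 = 0 := by
    funext p
    simp [F, G, zero_smul, NormedSpace.exp_zero, Matrix.one_mulVec]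
  obtain ⟨δ, hδpos, hδ⟩ := Metric.continuousAt_iff.mp (hFcont.continuousAt (x := (0:ℝ))) ε hεpos
  refine ⟨δ/2, by positivity, ?_⟩
  intro m hm s hs hsT
  -- reduce surjectivity to an orthogonality statement
  have hsur : ∀ x : EuclideanSpace ℝ (Fin n),
      (∀ j c, (fun i => x i) ⬝ᵥ (NormedSpace.exp (s j • A) *ᵥ (B *ᵥ Pi.single c 1)) = 0)
        → x = 0 := by
    intro x hxorth
    by_contra hxne
    set x' : Fin n → ℝ := fun i => x i with hx'
    have hx'ne : x' ≠ 0 := by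
      intro h
      exact hxne (by ext i; exact congrFun h i)
    have hx'pos : 0 < ‖x'‖ := norm_pos_iff.mpr hx'ne
    -- for each p = (k, c) find a zero of ⟨x, e^{tA} A^k B e_c⟩ in [0, δ/2]
    have hzero : ∀ p : Fin n × Fin d, ∃ ξ ∈ Set.Icc (0:ℝ) (δ/2),
        x' ⬝ᵥ (NormedSpace.exp (ξ • A) *ᵥ w p) = 0 := by
      rintro ⟨k, c⟩
      set u : Fin n → ℝ := B *ᵥ Pi.single c 1 with hu
      set g : ℕ → ℝ → ℝ :=
        fun j t => x' ⬝ᵥ (NormedSpace.exp (t • A) *ᵥ ((A ^ j) *ᵥ u)) with hg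
      have hgd : ∀ j t, HasDerivAt (g j) (g (j+1) t) t := by
        intro j t
        have := hasDerivAt_dot_exp A x' ((A ^ j) *ᵥ u) t
        have harr : A *ᵥ ((A ^ j) *ᵥ u) = (A ^ (j+1)) *ᵥ u := by
          rw [Matrix.mulVec_mulVec, ← pow_succ']
        rw [harr] at this
        exact this
      have hkm : (k:ℕ) + 1 ≤ m := by
        have := k.isLt
        omega
      set s' : Fin ((k:ℕ)+1) → ℝ := fun i => s (Fin.castLE hkm i) with hs'
      have hs'mono : StrictMono s' := by
        intro i j h
        apply hs
        rw [Fin.lt_def] at h ⊢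
        simp only [Fin.coe_castLE]
        exact h
      have h0 : ∀ i, g 0 (s' i) = 0 := by
        intro i
        show x' ⬝ᵥ (NormedSpace.exp (s' i • A) *ᵥ ((A ^ 0) *ᵥ u)) = 0
        rw [pow_zero, Matrix.one_mulVec]
        exact hxorth (Fin.castLE hkm i) c
      obtain ⟨ξ, hξ, hgz⟩ := rolle_family (k:ℕ) g hgd s' hs'mono h0
      refine ⟨ξ, ⟨le_trans (hsT _).1 hξ.1, le_trans hξ.2 (hsT _).2⟩, ?_⟩
      exact hgz
    -- the quantitative bound
    have hbound : ∀ p : Fin n × Fin d, ‖(P x') p‖ ≤ (n * ε) * ‖x'‖ := by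
      intro p
      obtain ⟨ξ, hξmem, hξ⟩ := hzero p
      have hdist : dist ξ (0:ℝ) < δ := by
        rw [Real.dist_eq, sub_zero, abs_of_nonneg hξmem.1]
        linarith [hξmem.2]
      have hFs := hδ hdist
      rw [hF0, dist_zero_right] at hFs
      have hentry : ∀ i, |(w p - NormedSpace.exp (ξ • A) *ᵥ w p) i| ≤ ε := by
        intro i
        have h1 : ‖F ξ p‖ ≤ ‖F ξ‖ := norm_le_pi_norm _ p
        have h2 : ‖(F ξ p) i‖ ≤ ‖F ξ p‖ := norm_le_pi_norm _ i
        have : ‖(F ξ p) i‖ ≤ ε := le_trans h2 (le_trans h1 (le_of_lt hFs))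
        simpa [F, G, Real.norm_eq_abs] using this
      have hXw : x' ⬝ᵥ w p = x' ⬝ᵥ (w p - NormedSpace.exp (ξ • A) *ᵥ w p) := by
        rw [dotProduct_sub, hξ, sub_zero]
      show ‖x' ⬝ᵥ w p‖ ≤ (n * ε) * ‖x'‖
      rw [Real.norm_eq_abs, hXw]
      calc |x' ⬝ᵥ (w p - NormedSpace.exp (ξ • A) *ᵥ w p)|
          ≤ ∑ i, |x' i * (w p - NormedSpace.exp (ξ • A) *ᵥ w p) i| :=
            Finset.abs_sum_le_sum_abs _ _
        _ ≤ ∑ _i : Fin n, ‖x'‖ * ε := by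
            apply Finset.sum_le_sum
            intro i _
            rw [abs_mul]
            apply mul_le_mul ?_ (hentry i) (abs_nonneg _) (norm_nonneg _)
            have := norm_le_pi_norm x' i
            simpa [Real.norm_eq_abs] using this
        _ = (n * ε) * ‖x'‖ := by
            rw [Finset.sum_const, Finset.card_univ, Fintype.card_fin]
            ring
    have hPx : ‖P x'‖ ≤ (n * ε) * ‖x'‖ :=
      (pi_norm_le_iff_of_nonneg (by positivity)).mpr hbound
    have h1 : ‖x'‖ ≤ (K:ℝ) * ‖P x'‖ := by
      have := hKa.le_mul_dist x' 0
      simpa [dist_zero_right, map_zero] using this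
    have hfinal : (K:ℝ) * ((n * ε) * ‖x'‖) < ‖x'‖ := by
      have hεeq : ε * (2 * ((K:ℝ)+1) * (n+1)) = 1 := by
        rw [hε]
        field_simp
      have h6 : (K:ℝ) * n * ε < 1 := by
        have h7 : (K:ℝ) * n < 2 * ((K:ℝ)+1) * (n+1) := by nlinarith
        have h8 := mul_lt_mul_of_pos_right h7 hεpos
        rw [mul_comm ε] at hεeq
        rw [hεeq] at h8
        exact h8
      have h9 := mul_lt_mul_of_pos_right h6 hx'pos
      nlinarith [h9]
    have h2 : (K:ℝ) * ‖P x'‖ ≤ (K:ℝ) * ((n * ε) * ‖x'‖) :=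
      mul_le_mul_of_nonneg_left hPx hKR
    linarith
  -- now conclude surjectivity
  let L : (Fin m → EuclideanSpace ℝ (Fin d)) →ₗ[ℝ] EuclideanSpace ℝ (Fin n) :=
    ∑ j, (Matrix.toEuclideanLin (NormedSpace.exp (s j • A) * B)).comp (LinearMap.proj j)
  have hfun : (fun y : Fin m → EuclideanSpace ℝ (Fin d) =>
      ∑ j, Matrix.toEuclideanLin (NormedSpace.exp (s j • A) * B) (y j)) = L := by
    funext y
    simp [L, LinearMap.sum_apply]
  rw [hfun]
  rw [← LinearMap.range_eq_top]
  rw [← Submodule.orthogonal_eq_bot_iff]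
  rw [Submodule.eq_bot_iff]
  intro x hx
  apply hsur
  intro j c
  have hmem : Matrix.toEuclideanLin (NormedSpace.exp (s j • A) * B)
      (EuclideanSpace.single c 1) ∈ LinearMap.range L := by
    refine ⟨Pi.single j (EuclideanSpace.single c 1), ?_⟩
    simp only [L, LinearMap.sum_apply, LinearMap.comp_apply, LinearMap.proj_apply]
    rw [Finset.sum_eq_single j]
    · simp
    · intro b _ hb; rw [Pi.single_eq_of_ne hb]; simp
    · simp
  have h0 := (Submodule.mem_orthogonal _ _).mp hx _ hmem
  rw [real_inner_comm] at h0
  rw [← h0]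
  simp only [PiLp.inner_apply, RCLike.inner_apply, conj_trivial]
  rw [Matrix.toEuclideanLin_apply]
  simp only [dotProduct]
  rw [← Matrix.mulVec_mulVec]
  congr 1
  funext i
  rw [mul_comm]
  rfl
end

section
/- A nontrivial quasi-polynomial y(t) = Σ_{j=1}^k Σ_{r=0}^{n-1} c_{rj} e^{λ_j t} t^r, with distinct complex numbers λ₁,...,λ_k (k ≤ n) and complex coefficients c_{rj} not all zero, has at most finitely many zeros on any compact interval; in particular, there exists T₀ > 0 depending only on n and λ₁,...,λ_k such that every such nontrivial quasi-polynomial has at most n·k zeros on [−T₀, T₀]. -/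
open Set

noncomputable section
namespace QP
open Polynomial intervalIntegral MeasureTheory





/-- The operator `q ↦ q' + μ q` as an endomorphism of `ℂ[X]`. -/
def Dop (μ : ℂ) : Module.End ℂ (Polynomial ℂ) :=
  Polynomial.derivative + μ • (1 : Module.End ℂ (Polynomial ℂ))

lemma Dop_apply (μ : ℂ) (p : ℂ[X]) : Dop μ p = derivative p + μ • p := by
  simp [Dop]

lemma degree_Dop_lt {μ : ℂ} {p : ℂ[X]} {n : ℕ} (h : p.degree < n) :
    (Dop μ p).degree < n := by
  rw [Dop_apply]
  exact lt_of_le_of_lt (degree_add_le _ _)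
    (max_lt (lt_of_le_of_lt (degree_derivative_le) h)
      (lt_of_le_of_lt (degree_smul_le _ _) h))

lemma degree_Dop_pow_lt {μ : ℂ} {p : ℂ[X]} {n : ℕ} (h : p.degree < n) (l : ℕ) :
    (((Dop μ) ^ l) p).degree < n := by
  induction l with
  | zero => simpa using h
  | succ l ih => rw [pow_succ', Module.End.mul_apply]; exact degree_Dop_lt ih

lemma Dop_inj {μ : ℂ} (hμ : μ ≠ 0) {p : ℂ[X]} (h : Dop μ p = 0) : p = 0 := by
  by_contra hp
  have hc : (Dop μ p).coeff p.natDegree = μ * p.leadingCoeff := by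
    rw [Dop_apply, coeff_add, coeff_derivative,
      coeff_eq_zero_of_natDegree_lt (lt_add_one _), coeff_smul, smul_eq_mul]
    rw [leadingCoeff]; ring
  rw [h, coeff_zero] at hc
  rcases mul_eq_zero.1 hc.symm with h1 | h1
  · exact hμ h1
  · exact hp (leadingCoeff_eq_zero.1 h1)

lemma Dop_pow_inj {μ : ℂ} (hμ : μ ≠ 0) {p : ℂ[X]} (l : ℕ) (h : ((Dop μ) ^ l) p = 0) :
    p = 0 := by
  induction l generalizing p with
  | zero => simpa using h
  | succ l ih =>
      rw [pow_succ, Module.End.mul_apply] at h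
      exact Dop_inj hμ (ih h)

lemma Dop_zero_pow (l : ℕ) (p : ℂ[X]) : ((Dop (0:ℂ)) ^ l) p = derivative^[l] p := by
  induction l generalizing p with
  | zero => simp
  | succ l ih =>
      rw [pow_succ, Module.End.mul_apply, ih (Dop 0 p), Dop_apply, Function.iterate_succ_apply]
      simp


variable {k : ℕ}

/-- `W lam p i` = the `i`-th derivative at `0` of `∑ j, p j (t) e^{lam j t}`, computed
algebraically. -/
def W (lam : Fin k → ℂ) (p : Fin k → ℂ[X]) (i : ℕ) : ℂ :=
  ∑ j, (((Dop (lam j)) ^ i) (p j)).eval 0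

lemma Dop_sub_apply (lamj μ : ℂ) (q : ℂ[X]) :
    Dop (lamj - μ) q = Dop lamj q - μ • q := by
  rw [Dop_apply, Dop_apply, sub_smul]; abel

lemma W_zero (lam : Fin k → ℂ) (p : Fin k → ℂ[X]) : W lam p 0 = ∑ j, (p j).eval 0 := by
  simp [W]

lemma W_succ (lam : Fin k → ℂ) (p : Fin k → ℂ[X]) (i : ℕ) :
    W lam p (i+1) = W lam (fun j => Dop (lam j) (p j)) i := by
  simp only [W, pow_succ, Module.End.mul_apply]

lemma W_shift (lam : Fin k → ℂ) (μ : ℂ) :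
    ∀ (i : ℕ) (p : Fin k → ℂ[X]) (m : ℕ), (∀ l < m, W lam p l = 0) → i < m →
      W (fun j => lam j - μ) p i = 0 := by
  intro i
  induction i with
  | zero =>
      intro p m h him
      rw [show W (fun j => lam j - μ) p 0 = W lam p 0 by simp [W_zero]]
      exact h 0 him
  | succ i ih =>
      intro p m h him
      have key : W (fun j => lam j - μ) p (i+1)
          = W (fun j => lam j - μ) (fun j => Dop (lam j) (p j)) i
            - μ * W (fun j => lam j - μ) p i := by
        rw [W_succ]
        simp only [W, Dop_sub_apply, map_sub, _root_.map_smul, eval_sub, eval_smul, smul_eq_mul,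
          Finset.sum_sub_distrib, Finset.mul_sum]
      rw [key]
      have h1 : W (fun j => lam j - μ) (fun j => Dop (lam j) (p j)) i = 0 := by
        refine ih _ (m-1) (fun l hl => ?_) (by omega)
        rw [← W_succ]
        exact h (l+1) (by omega)
      have h2 : W (fun j => lam j - μ) p i = 0 := ih _ m h (by omega)
      rw [h1, h2]; ring


lemma eval_zero_iterate_deriv {p : ℂ[X]} {n : ℕ} (hdeg : p.degree < n)
    (h : ∀ i < n, (derivative^[i] p).eval 0 = 0) : p = 0 := by
  ext m
  rcases lt_or_ge m n with hm | hm
  · have := h m hm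
    rw [← coeff_zero_eq_eval_zero, coeff_iterate_derivative] at this
    simp only [zero_add, Nat.descFactorial_self, nsmul_eq_mul] at this
    have hf : ((m.factorial : ℂ)) ≠ 0 := by
      exact_mod_cast Nat.cast_ne_zero.2 m.factorial_ne_zero
    simpa [coeff_zero] using (mul_eq_zero.1 this).resolve_left hf
  · rw [coeff_zero]
    exact coeff_eq_zero_of_degree_lt (lt_of_lt_of_le hdeg (by exact_mod_cast hm))

/-- Key algebraic lemma: if all "derivatives at 0" up to order `n*k` of the exponential
polynomial corresponding to `(lam, p)` vanish, then all `p j = 0`. -/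
lemma OL (n : ℕ) : ∀ (k : ℕ) (lam : Fin k → ℂ), Function.Injective lam →
    ∀ p : Fin k → ℂ[X], (∀ j, (p j).degree < n) →
    (∀ i < n * k, W lam p i = 0) → ∀ j, p j = 0 := by
  intro k
  induction k with
  | zero => intro lam _ p _ _ j; exact j.elim0
  | succ k ih =>
      intro lam hlam p hdeg hW
      set μ := lam (Fin.last k) with hμdef
      set lam' : Fin (k+1) → ℂ := fun j => lam j - μ with hlam'
      have h1 : ∀ i < n * (k+1), W lam' p i = 0 := fun i hi => W_shift lam μ i p _ hW hi
      set P : Fin (k+1) → ℂ[X] := fun j => ((Dop (lam' j)) ^ n) (p j) with hP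
      have hWn : ∀ i, W lam' P i = W lam' p (i + n) := by
        intro i
        simp only [W, hP, ← Module.End.mul_apply, ← pow_add]
      have hPlast : P (Fin.last k) = 0 := by
        have : lam' (Fin.last k) = 0 := by simp [hlam', hμdef]
        rw [hP]
        simp only [this, Dop_zero_pow]
        rcases eq_or_ne (p (Fin.last k)) 0 with h | h
        · simp [h]
        · exact iterate_derivative_eq_zero
            ((natDegree_lt_iff_degree_lt h).2 (by exact_mod_cast hdeg _))
      -- restrict to the first k indices
      set lam2 : Fin k → ℂ := fun j => lam' j.castSucc with hlam2
      set P2 : Fin k → ℂ[X] := fun j => P j.castSucc with hP2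
      have hW2 : ∀ i < n * k, W lam2 P2 i = 0 := by
        intro i hi
        have : W lam' P i = W lam2 P2 i := by
          rw [W, Fin.sum_univ_castSucc, hPlast]
          simp [W, lam2, P2]
        rw [← this, hWn]
        exact h1 _ (by rw [Nat.mul_succ]; omega)
      have hlam2inj : Function.Injective lam2 := by
        intro a b hab
        have : lam a.castSucc = lam b.castSucc := by
          simpa [hlam2, hlam', sub_left_inj] using hab
        exact Fin.castSucc_injective k (hlam this)
      have hdeg2 : ∀ j, (P2 j).degree < n := fun j => degree_Dop_pow_lt (hdeg _) n
      have hP2zero : ∀ j, P2 j = 0 := ih lam2 hlam2inj P2 hdeg2 hW2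
      have hpcast : ∀ j : Fin k, p j.castSucc = 0 := by
        intro j
        have hne : lam' j.castSucc ≠ 0 := by
          simp only [hlam', sub_ne_zero]
          exact fun h => (Fin.castSucc_lt_last j).ne (hlam h)
        exact Dop_pow_inj hne n (hP2zero j)
      -- now the last polynomial
      have hlast : p (Fin.last k) = 0 := by
        apply eval_zero_iterate_deriv (hdeg _)
        intro i hi
        have := h1 i (by rw [Nat.mul_succ]; have := Nat.zero_le (n*k); omega)
        rw [W, Fin.sum_univ_castSucc] at this
        have hz : ∀ j : Fin k, (((Dop (lam' j.castSucc)) ^ i) (p j.castSucc)).eval 0 = 0 := by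
          intro j; rw [hpcast j]; simp
        rw [Finset.sum_eq_zero (fun j _ => hz j), zero_add] at this
        rw [show lam' (Fin.last k) = 0 by simp [hlam', hμdef], Dop_zero_pow] at this
        exact this
      intro j
      refine Fin.lastCases ?_ ?_ j
      · exact hlast
      · exact hpcast

def Fn (lam : Fin k → ℂ) (p : Fin k → ℂ[X]) (t : ℝ) : ℂ :=
  ∑ j, (p j).eval (t:ℂ) * Complex.exp (lam j * t)

lemma hasDerivAt_term (μ : ℂ) (q : ℂ[X]) (t : ℝ) :
    HasDerivAt (fun s : ℝ => q.eval (s:ℂ) * Complex.exp (μ * s))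
      ((Dop μ q).eval (t:ℂ) * Complex.exp (μ * t)) t := by
  have h2 : HasDerivAt (fun z : ℂ => Complex.exp (μ * z)) (Complex.exp (μ * t) * μ) (t:ℂ) := by
    have h := (Complex.hasDerivAt_exp (μ * t)).comp (t:ℂ)
      ((hasDerivAt_id' (t:ℂ)).const_mul μ); simp only [mul_one] at h; exact h
  have hc := ((q.hasDerivAt ((t:ℝ):ℂ)).mul h2).comp_ofReal
  convert hc using 1
  · rfl
  rw [Dop_apply]
  simp only [eval_add, eval_smul, smul_eq_mul]
  ring

lemma hasDerivAt_Fn (lam : Fin k → ℂ) (p : Fin k → ℂ[X]) (t : ℝ) :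
    HasDerivAt (Fn lam p) (Fn lam (fun j => Dop (lam j) (p j)) t) t :=
  by have := HasDerivAt.fun_sum (u := Finset.univ) fun j _ => hasDerivAt_term (lam j) (p j) t; exact this

/-- The canonical tower of derivatives of `Fn lam p`. -/
def Gt (lam : Fin k → ℂ) (p : Fin k → ℂ[X]) (l : ℕ) (x : ℝ) : ℂ :=
  Fn lam (fun j => ((Dop (lam j)) ^ l) (p j)) x

lemma Gt_tower (lam : Fin k → ℂ) (p : Fin k → ℂ[X]) (l : ℕ) (x : ℝ) :
    HasDerivAt (Gt lam p l) (Gt lam p (l+1) x) x := by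
  have e : (fun j => ((Dop (lam j)) ^ (l+1)) (p j))
      = fun j => Dop (lam j) (((Dop (lam j)) ^ l) (p j)) := by
    funext j; rw [pow_succ', Module.End.mul_apply]
  have := hasDerivAt_Fn lam (fun j => ((Dop (lam j)) ^ l) (p j)) x
  show HasDerivAt (Fn lam (fun j => ((Dop (lam j)) ^ l) (p j))) (Fn lam (fun j => ((Dop (lam j)) ^ (l+1)) (p j)) x) x
  rw [e]; exact this



variable {G : ℕ → ℝ → ℂ}

lemma tower_cont (hG : ∀ l x, HasDerivAt (G l) (G (l+1) x) x) (l : ℕ) :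
    Continuous (G l) :=
  continuous_iff_continuousAt.2 fun x => (hG l x).differentiableAt.continuousAt

/-- The "divided difference" auxiliary tower based at `t0`. -/
def Hh (G : ℕ → ℝ → ℂ) (t0 : ℝ) (l : ℕ) (x : ℝ) : ℂ :=
  ∫ s in (0:ℝ)..1, (s:ℝ)^l • G (l+1) (t0 + s*(x - t0))

lemma Hh_tower (hG : ∀ l x, HasDerivAt (G l) (G (l+1) x) x) (t0 : ℝ) (l : ℕ) (x₀ : ℝ) :
    HasDerivAt (Hh G t0 l) (Hh G t0 (l+1) x₀) x₀ := by
  set R : ℝ := |x₀ - t0| + 1 with hR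
  obtain ⟨D, hD⟩ := (isCompact_Icc (a := t0 - R) (b := t0 + R)).exists_bound_of_continuousOn
    (tower_cont hG (l+2)).continuousOn
  have hmem : ∀ s ∈ Set.uIoc (0:ℝ) 1, ∀ x ∈ Metric.ball x₀ 1,
      t0 + s*(x - t0) ∈ Set.Icc (t0 - R) (t0 + R) := by
    intro s hs x hx
    rw [Set.uIoc_of_le (by norm_num : (0:ℝ) ≤ 1)] at hs
    have hs0 : 0 < s := hs.1
    have hs1 : s ≤ 1 := hs.2
    have hxx : |x - x₀| < 1 := by simpa [Real.dist_eq] using hx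
    have : |s * (x - t0)| ≤ R := by
      rw [abs_mul, abs_of_pos hs0]
      have h1 : |x - t0| ≤ |x - x₀| + |x₀ - t0| := abs_sub_le x x₀ t0
      nlinarith [abs_nonneg (x - t0), abs_nonneg (x - x₀)]
    constructor <;> [linarith [abs_le.1 this |>.1]; linarith [abs_le.1 this |>.2]]
  have hcF : ∀ (m : ℕ) (x : ℝ), Continuous (fun s : ℝ => (s:ℝ)^m • G (m+1) (t0 + s*(x - t0))) := by
    intro m x
    exact (continuous_pow m).smul ((tower_cont hG (m+1)).comp (by continuity))
  have := (intervalIntegral.hasDerivAt_integral_of_dominated_loc_of_deriv_le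
    (μ := volume) (𝕜 := ℝ) (a := 0) (b := 1)
    (F := fun x s => (s:ℝ)^l • G (l+1) (t0 + s*(x - t0)))
    (F' := fun x s => (s:ℝ)^(l+1) • G (l+2) (t0 + s*(x - t0)))
    (x₀ := x₀) (bound := fun _ => D)
    (s := Metric.ball x₀ 1) (hs := Metric.ball_mem_nhds x₀ one_pos)
    (hF_meas := Filter.Eventually.of_forall fun x => ((hcF l x)).aestronglyMeasurable)
    (hF_int := (hcF l x₀).intervalIntegrable _ _)
    (hF'_meas := (hcF (l+1) x₀).aestronglyMeasurable)
    (h_bound := ae_of_all _ (fun s hs x hx => by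
      rw [norm_smul]
      have h1 : ‖(s:ℝ)^(l+1)‖ ≤ 1 := by
        rw [Set.uIoc_of_le (by norm_num : (0:ℝ) ≤ 1)] at hs
        rw [Real.norm_eq_abs, abs_pow]
        exact pow_le_one₀ (abs_nonneg s) (by rw [abs_of_pos hs.1]; exact hs.2)
      have h2 := hD _ (hmem s hs x hx)
      nlinarith [norm_nonneg (G (l+2) (t0 + s*(x - t0)))]))
    (bound_integrable := intervalIntegrable_const)
    (h_diff := ae_of_all _ (fun s hs x hx => by
      have hu : HasDerivAt (fun x : ℝ => t0 + s*(x - t0)) s x := by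
        simpa using (((hasDerivAt_id x).sub_const t0).const_mul s).const_add t0
      have := ((hG (l+1) (t0 + s*(x - t0))).scomp x hu).const_smul ((s:ℝ)^l)
      convert this using 1
      · rfl
      simp only [smul_smul, pow_succ]
      try push_cast
      try ring)))
  exact this.2

lemma Hh_eq (hG : ∀ l x, HasDerivAt (G l) (G (l+1) x) x) {t0 : ℝ} (h0 : G 0 t0 = 0) (x : ℝ) :
    G 0 x = (x - t0) • Hh G t0 0 x := by
  have hφ : ∀ s ∈ Set.uIcc (0:ℝ) 1, HasDerivAt (fun s : ℝ => G 0 (t0 + s*(x - t0)))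
      ((x - t0) • G 1 (t0 + s*(x - t0))) s := by
    intro s _
    have hu : HasDerivAt (fun s : ℝ => t0 + s*(x - t0)) (x - t0) s := by
      simpa using ((hasDerivAt_id s).mul_const (x - t0)).const_add t0
    exact (hG 0 (t0 + s*(x - t0))).scomp s hu
  have hint : IntervalIntegrable (fun s : ℝ => (x - t0) • G 1 (t0 + s*(x - t0))) volume 0 1 :=
    ((continuous_const : Continuous fun _ : ℝ => x - t0).smul ((tower_cont hG 1).comp (by continuity : Continuous fun s : ℝ => t0 + s*(x - t0)))).intervalIntegrable _ _
  have hFTC := intervalIntegral.integral_eq_sub_of_hasDerivAt hφ hint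
  simp only [one_mul, mul_zero, add_zero, zero_mul] at hFTC
  rw [intervalIntegral.integral_smul] at hFTC
  have : Hh G t0 0 x = ∫ s in (0:ℝ)..1, G 1 (t0 + s*(x - t0)) := by
    simp [Hh]
  rw [this, hFTC]
  simp [h0]

lemma Hh_bound (hG : ∀ l x, HasDerivAt (G l) (G (l+1) x) x) {t0 u v C : ℝ} {l : ℕ}
    (ht0 : t0 ∈ Set.Icc u v) {x : ℝ} (hx : x ∈ Set.Icc u v)
    (hC : ∀ y ∈ Set.Icc u v, ‖G (l+1) y‖ ≤ C) : ‖Hh G t0 l x‖ ≤ C := by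
  have := intervalIntegral.norm_integral_le_of_norm_le_const
    (C := C) (f := fun s : ℝ => (s:ℝ)^l • G (l+1) (t0 + s*(x - t0))) (a := 0) (b := 1) ?_
  · simpa [Hh] using this
  · intro s hs
    rw [Set.uIoc_of_le (by norm_num : (0:ℝ) ≤ 1)] at hs
    have hmem : t0 + s*(x - t0) ∈ Set.Icc u v := by
      constructor <;> nlinarith [ht0.1, ht0.2, hx.1, hx.2, hs.1.le, hs.2]
    have h1 : ‖(s:ℝ)^l‖ ≤ 1 := by
      rw [Real.norm_eq_abs, abs_pow]
      exact pow_le_one₀ (abs_nonneg s) (by rw [abs_of_pos hs.1]; exact hs.2)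
    have h2 := hC _ hmem
    rw [norm_smul]
    nlinarith [norm_nonneg (G (l+1) (t0 + s*(x - t0)))]

lemma tower_congr {G' : ℕ → ℝ → ℂ} (hG : ∀ l x, HasDerivAt (G l) (G (l+1) x) x)
    (hG' : ∀ l x, HasDerivAt (G' l) (G' (l+1) x) x) (h0 : G 0 = G' 0) : ∀ l, G l = G' l := by
  intro l
  induction l with
  | zero => exact h0
  | succ l ih =>
      funext x
      rw [← (hG l x).deriv, ← (hG' l x).deriv, ih]


/-- Constants in the key estimate. -/
def Bc : ℕ → ℝ
  | 0 => 1
  | (i+1) => (i+2) * Bc i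

lemma Bc_one_le (i : ℕ) : 1 ≤ Bc i := by
  induction i with
  | zero => simp [Bc]
  | succ i ih => rw [Bc]; nlinarith

lemma Bc_nonneg (i : ℕ) : 0 ≤ Bc i := le_trans zero_le_one (Bc_one_le i)

/-- Key quantitative estimate: if `G 0` has `i` distinct zeros in `[u,v] ∋ 0` and
`‖G i‖ ≤ C` on `[u,v]`, then `‖G l 0‖ ≤ Bc i * C * (v-u)^(i-l)` for all `l ≤ i`. -/
lemma KL : ∀ (i : ℕ) (G : ℕ → ℝ → ℂ), (∀ l x, HasDerivAt (G l) (G (l+1) x) x) →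
    ∀ u v : ℝ, u ≤ 0 → 0 ≤ v →
    ∀ S : Finset ℝ, (↑S ⊆ Set.Icc u v) → (∀ x ∈ S, G 0 x = 0) → S.card = i →
    ∀ C : ℝ, (∀ x ∈ Set.Icc u v, ‖G i x‖ ≤ C) →
    ∀ l ≤ i, ‖G l 0‖ ≤ Bc i * C * (v - u)^(i - l) := by
  intro i
  induction i with
  | zero =>
      intro G hG u v hu hv S hS hSz hcard C hC l hl
      interval_cases l
      simpa [Bc] using hC 0 ⟨hu, hv⟩
  | succ i ih =>
      intro G hG u v hu hv S hS hSz hcard C hC l hl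
      have hC0 : 0 ≤ C := le_trans (norm_nonneg _) (hC 0 ⟨hu, hv⟩)
      have hw : 0 ≤ v - u := by linarith
      obtain ⟨t0, ht0S⟩ := Finset.card_pos.1 (by omega : 0 < S.card)
      have ht0 : t0 ∈ Set.Icc u v := hS ht0S
      set H : ℕ → ℝ → ℂ := Hh G t0 with hHdef
      have hH : ∀ l x, HasDerivAt (H l) (H (l+1) x) x := fun l x => Hh_tower hG t0 l x
      -- the product-rule tower
      set K : ℕ → ℝ → ℂ := fun l x => (x - t0) • H l x + (l:ℝ) • H (l-1) x with hKdef
      have hK : ∀ l x, HasDerivAt (K l) (K (l+1) x) x := by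
        intro l x
        have h1 : HasDerivAt (fun x => (x - t0) • H l x)
            ((x - t0) • H (l+1) x + (1:ℝ) • H l x) x :=
          ((hasDerivAt_id x).sub_const t0).smul (hH l x)
        have h2 : HasDerivAt (fun x => (l:ℝ) • H (l-1) x) ((l:ℝ) • H (l-1+1) x) x :=
          (hH (l-1) x).const_smul (l:ℝ)
        cases l with
        | zero =>
            have := h1.add (h2)
            convert this using 1
            · rfl
            · rfl
            simp [hKdef]
            try abel
        | succ m =>
            have := h1.add (h2)
            convert this using 1
            · rfl
            · rfl
            have e1 : m + 1 - 1 + 1 = m + 1 := by omega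
            simp only [hKdef, e1, Nat.succ_sub_one]
            push_cast
            rw [one_smul]
            module
      have hGK : ∀ l, G l = K l := by
        apply tower_congr hG hK
        funext x
        have := Hh_eq hG (hSz t0 ht0S) x
        simp only [hKdef, Nat.zero_sub, Nat.cast_zero, zero_smul, add_zero]
        exact this
      -- zeros of H 0
      set S' : Finset ℝ := S.erase t0 with hS'
      have hS'card : S'.card = i := by
        rw [hS', Finset.card_erase_of_mem ht0S, hcard]
        omega
      have hS'sub : (↑S' : Set ℝ) ⊆ Set.Icc u v :=
        fun x hx => hS (Finset.mem_of_mem_erase hx)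
      have hS'z : ∀ x ∈ S', H 0 x = 0 := by
        intro x hx
        have hxne : x ≠ t0 := Finset.ne_of_mem_erase hx
        have hx0 : G 0 x = 0 := hSz x (Finset.mem_of_mem_erase hx)
        have := Hh_eq hG (hSz t0 ht0S) x
        rw [hx0] at this
        rcases smul_eq_zero.1 this.symm with h | h
        · exact absurd (by linarith [sub_eq_zero.1 h] : x = t0) hxne
        · exact h
      have hHC : ∀ x ∈ Set.Icc u v, ‖H i x‖ ≤ C := fun x hx =>
        Hh_bound hG ht0 hx hC
      have hIH := ih H hH u v hu hv S' hS'sub hS'z hS'card C hHC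
      -- conclude
      have ht0abs : |t0| ≤ v - u := by
        rw [abs_le]; constructor <;> [linarith [ht0.1]; linarith [ht0.2]]
      rcases Nat.lt_or_ge l (i+1) with hli | hli
      · have hl_le : l ≤ i := by omega
        have hGl : G l 0 = (0 - t0) • H l 0 + (l:ℝ) • H (l-1) 0 := by rw [hGK l]
        rw [hGl]
        have hb1 : ‖(0 - t0) • H l 0‖ ≤ (v - u) * (Bc i * C * (v-u)^(i-l)) := by
          rw [norm_smul, Real.norm_eq_abs]
          have := hIH l hl_le
          have habs : |(0:ℝ) - t0| = |t0| := by rw [zero_sub, abs_neg]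
          rw [habs]
          have hnn : (0:ℝ) ≤ ‖H l 0‖ := norm_nonneg _
          nlinarith [abs_nonneg t0]
        cases l with
        | zero =>
            have : ‖(0 - t0) • H 0 0 + (0:ℝ) • H (0-1) 0‖ = ‖(0 - t0) • H 0 0‖ := by
              norm_num
            rw [show ((0:ℕ):ℝ) = (0:ℝ) by norm_num, this]
            refine le_trans hb1 ?_
            have e : i + 1 - 0 = (i - 0) + 1 := by omega
            rw [e, pow_succ, Bc]
            have : (v-u) * (Bc i * C * (v-u)^(i-0)) = Bc i * C * ((v-u)^(i-0) * (v-u)) := by ring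
            rw [this]
            nlinarith [Bc_nonneg i, pow_nonneg hw (i-0), mul_nonneg (Bc_nonneg i) hC0,
              mul_nonneg (mul_nonneg (Bc_nonneg i) hC0) (mul_nonneg (pow_nonneg hw (i-0)) hw)]
        | succ m =>
            have hb2 : ‖((m+1 : ℕ):ℝ) • H (m+1-1) 0‖ ≤ (m+1) * (Bc i * C * (v-u)^(i-m)) := by
              rw [norm_smul, Real.norm_eq_abs, Nat.succ_sub_one]
              have := hIH m (by omega)
              have : ‖H m 0‖ ≤ Bc i * C * (v-u)^(i-m) := by
                have h2 := hIH m (by omega)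
                exact h2
              have habs : |((m+1 : ℕ):ℝ)| = (m:ℝ)+1 := by
                rw [abs_of_nonneg] <;> push_cast <;> [ring; positivity]
              rw [habs]
              nlinarith [norm_nonneg (H m 0)]
            refine le_trans (norm_add_le _ _) ?_
            refine le_trans (add_le_add hb1 hb2) ?_
            have e1 : i - (m+1) + 1 = i - m := by omega
            have e2 : i + 1 - (m+1) = i - m := by omega
            rw [e2, Bc]
            have hpow : (v-u)^(i-m) = (v-u)^(i-(m+1)) * (v-u) := by
              rw [← pow_succ, e1]
            rw [hpow]
            have hmle : (m:ℝ) + 1 ≤ (i:ℝ) + 1 := by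
              have h : (m:ℝ) ≤ (i:ℝ) := Nat.cast_le.mpr (by omega)
              linarith
            nlinarith [Bc_nonneg i, pow_nonneg hw (i-(m+1)), hC0, hw, hmle,
              mul_nonneg (mul_nonneg (mul_nonneg (Bc_nonneg i) hC0)
                (pow_nonneg hw (i-(m+1)))) hw]
      · have hl_eq : l = i + 1 := by omega
        subst hl_eq
        have := hC 0 ⟨hu, hv⟩
        have hpow0 : (v-u)^(i+1-(i+1)) = 1 := by simp
        rw [hpow0, mul_one]
        nlinarith [Bc_one_le (i+1)]


variable {n : ℕ}

def pOf (c : Fin k → Fin n → ℂ) (j : Fin k) : ℂ[X] :=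
  ∑ r : Fin n, c j r • X ^ (r : ℕ)

lemma coeff_pOf (c : Fin k → Fin n → ℂ) (j : Fin k) (r : Fin n) :
    (pOf c j).coeff (r : ℕ) = c j r := by
  rw [pOf, finset_sum_coeff]
  rw [Finset.sum_eq_single r]
  · simp
  · intro b _ hbr
    simp only [coeff_smul, coeff_X_pow, smul_eq_mul]
    rw [if_neg (by simpa [Fin.val_eq_val] using (fun h => hbr h.symm))]
    simp
  · intro h; exact absurd (Finset.mem_univ r) h

lemma degree_pOf_lt (c : Fin k → Fin n → ℂ) (j : Fin k) : (pOf c j).degree < n := by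
  refine lt_of_le_of_lt (degree_sum_le _ _) ?_
  rw [Finset.sup_lt_iff (by exact_mod_cast WithBot.bot_lt_coe n)]
  intro r _
  refine lt_of_le_of_lt (degree_smul_le _ _) ?_
  rw [degree_X_pow]
  exact_mod_cast r.2

lemma pOf_eq_zero_iff (c : Fin k → Fin n → ℂ) : (∀ j, pOf c j = 0) ↔ c = 0 := by
  constructor
  · intro h
    funext j r
    rw [← coeff_pOf c j r, h j]
    simp
  · intro h j
    subst h
    simp [pOf]

lemma pOf_add (c c' : Fin k → Fin n → ℂ) (j : Fin k) :
    pOf (c + c') j = pOf c j + pOf c' j := by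
  simp [pOf, add_smul, Finset.sum_add_distrib]

lemma pOf_smul (a : ℂ) (c : Fin k → Fin n → ℂ) (j : Fin k) :
    pOf (a • c) j = a • pOf c j := by
  simp [pOf, Finset.smul_sum, smul_smul]


lemma Fn_pOf (lam : Fin k → ℂ) (c : Fin k → Fin n → ℂ) (t : ℝ) :
    Fn lam (pOf c) t = ∑ j, ∑ r, c j r * Complex.exp (lam j * t) * (t : ℂ) ^ (r : ℕ) := by
  unfold Fn pOf
  refine Finset.sum_congr rfl fun j _ => ?_
  rw [eval_finset_sum, Finset.sum_mul]
  refine Finset.sum_congr rfl fun r _ => ?_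
  simp only [eval_smul, eval_pow, eval_X, smul_eq_mul]
  ring

lemma W_add (lam : Fin k → ℂ) (p q : Fin k → ℂ[X]) (i : ℕ) :
    W lam (fun j => p j + q j) i = W lam p i + W lam q i := by
  simp [W, map_add, eval_add, Finset.sum_add_distrib]

lemma W_smul (lam : Fin k → ℂ) (a : ℂ) (p : Fin k → ℂ[X]) (i : ℕ) :
    W lam (fun j => a • p j) i = a * W lam p i := by
  simp [W, _root_.map_smul, eval_smul, Finset.mul_sum, smul_eq_mul]

/-- The linear map sending coefficients to the first `n*k` derivatives at `0`. -/
def Phi (lam : Fin k → ℂ) : (Fin k → Fin n → ℂ) →ₗ[ℂ] (Fin (n*k) → ℂ) where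
  toFun c := fun l => W lam (pOf c) l
  map_add' c c' := by
    funext l
    have : pOf (c + c') = fun j => pOf c j + pOf c' j := funext (pOf_add c c')
    simp [this, W_add]
  map_smul' a c := by
    funext l
    have : pOf (a • c) = fun j => a • pOf c j := funext (pOf_smul a c)
    simp [this, W_smul]


lemma exists_eps (hk0 : 0 < k) (hn0 : 0 < n) (lam : Fin k → ℂ)
    (hinj : Function.Injective (Phi (n := n) lam)) :
    ∃ ε > 0, ∀ c : Fin k → Fin n → ℂ, ε * ‖c‖ ≤ ‖Phi (n := n) lam c‖ := by
  haveI : Nonempty (Fin k) := ⟨⟨0, hk0⟩⟩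
  haveI : Nonempty (Fin n) := ⟨⟨0, hn0⟩⟩
  have hcont : Continuous fun c : Fin k → Fin n → ℂ => ‖Phi (n := n) lam c‖ :=
    ((Phi (n := n) lam).continuous_of_finiteDimensional).norm
  have hsne : (Metric.sphere (0 : Fin k → Fin n → ℂ) 1).Nonempty := by
    refine ⟨fun _ _ => 1, ?_⟩
    rw [Metric.mem_sphere, dist_zero_right, pi_norm_const, pi_norm_const, norm_one]
  obtain ⟨c₀, hc₀, hminOn⟩ := (isCompact_sphere (0 : Fin k → Fin n → ℂ) 1).exists_isMinOn
    hsne hcont.continuousOn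
  have hmin : ∀ y ∈ Metric.sphere (0 : Fin k → Fin n → ℂ) 1,
      ‖Phi (n := n) lam c₀‖ ≤ ‖Phi (n := n) lam y‖ := fun y hy => hminOn hy
  have hc₀norm : ‖c₀‖ = 1 := by
    rw [Metric.mem_sphere, dist_zero_right] at hc₀
    exact hc₀
  have hεpos : 0 < ‖Phi (n := n) lam c₀‖ := by
    rw [norm_pos_iff]
    intro h
    have hc0 : c₀ = 0 := hinj (by rw [h, map_zero])
    rw [hc0] at hc₀norm
    simp at hc₀norm
  refine ⟨‖Phi (n := n) lam c₀‖, hεpos, fun c => ?_⟩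
  rcases eq_or_ne c 0 with rfl | hc
  · simp
  · have hcn : (0:ℝ) < ‖c‖ := norm_pos_iff.2 hc
    set u : Fin k → Fin n → ℂ := ((‖c‖ : ℂ))⁻¹ • c with hudef
    have hu : ‖u‖ = 1 := by
      rw [hudef, norm_smul, norm_inv, Complex.norm_real, Real.norm_eq_abs,
        abs_of_pos hcn]
      field_simp
    have hmem : u ∈ Metric.sphere (0 : Fin k → Fin n → ℂ) 1 := by
      rw [Metric.mem_sphere, dist_zero_right]; exact hu
    have h1 := hmin u hmem
    rw [hudef, _root_.map_smul, norm_smul, norm_inv, Complex.norm_real, Real.norm_eq_abs,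
      abs_of_pos hcn] at h1
    have h2 := mul_le_mul_of_nonneg_left h1 hcn.le
    rw [← mul_assoc, mul_inv_cancel₀ (ne_of_gt hcn), one_mul] at h2
    linarith

def beta (lam : Fin k → ℂ) (l : ℕ) (j : Fin k) (r : Fin n) (x : ℝ) : ℂ :=
  (((Dop (lam j)) ^ l) ((X : ℂ[X]) ^ (r : ℕ))).eval (x:ℂ) * Complex.exp (lam j * x)

lemma Fn_pow_pOf_eq (lam : Fin k → ℂ) (c : Fin k → Fin n → ℂ) (l : ℕ) (x : ℝ) :
    Fn lam (fun j => ((Dop (lam j)) ^ l) (pOf c j)) x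
      = ∑ j, ∑ r, c j r * beta lam l j r x := by
  unfold Fn pOf beta
  refine Finset.sum_congr rfl fun j _ => ?_
  simp only [map_sum, eval_finset_sum, Finset.sum_mul, _root_.map_smul, eval_smul, smul_eq_mul]
  refine Finset.sum_congr rfl fun r _ => ?_
  ring

lemma continuous_beta (lam : Fin k → ℂ) (l : ℕ) (j : Fin k) (r : Fin n) :
    Continuous (beta lam l j r) := by
  unfold beta
  exact ((Polynomial.continuous _).comp Complex.continuous_ofReal).mul
    (Complex.continuous_exp.comp (continuous_const.mul Complex.continuous_ofReal))

lemma exists_K (lam : Fin k → ℂ) (N : ℕ) :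
    ∃ K : ℝ, 0 ≤ K ∧ ∀ l ≤ N, ∀ c : Fin k → Fin n → ℂ, ∀ x ∈ Set.Icc (-1:ℝ) 1,
      ‖Fn lam (fun j => ((Dop (lam j)) ^ l) (pOf c j)) x‖ ≤ ‖c‖ * K := by
  set Bf : ℝ → ℝ := fun x =>
      ∑ l ∈ Finset.range (N+1), ∑ j : Fin k, ∑ r : Fin n, ‖beta lam l j r x‖ with hBf
  have hBfc : Continuous Bf := by
    apply continuous_finset_sum
    intro l _
    apply continuous_finset_sum
    intro j _
    apply continuous_finset_sum
    intro r _
    exact (continuous_beta lam l j r).norm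
  have hBfnn : ∀ x, 0 ≤ Bf x := fun x => by positivity
  obtain ⟨K, hK⟩ := (isCompact_Icc (a := (-1:ℝ)) (b := 1)).exists_bound_of_continuousOn
    hBfc.continuousOn
  have hK0 : 0 ≤ K := le_trans (norm_nonneg _) (hK 0 (by norm_num))
  refine ⟨K, hK0, fun l hl c x hx => ?_⟩
  rw [Fn_pow_pOf_eq]
  have hBfK : Bf x ≤ K := le_trans (le_abs_self _) (hK x hx)
  have step1 : ‖∑ j, ∑ r, c j r * beta lam l j r x‖
      ≤ ∑ j : Fin k, ∑ r : Fin n, ‖c‖ * ‖beta lam l j r x‖ := by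
    refine le_trans (norm_sum_le _ _) (Finset.sum_le_sum fun j _ => ?_)
    refine le_trans (norm_sum_le _ _) (Finset.sum_le_sum fun r _ => ?_)
    rw [norm_mul]
    exact mul_le_mul_of_nonneg_right
      (le_trans (norm_le_pi_norm (c j) r) (norm_le_pi_norm c j)) (norm_nonneg _)
  refine le_trans step1 ?_
  have : ∑ j : Fin k, ∑ r : Fin n, ‖c‖ * ‖beta lam l j r x‖
      = ‖c‖ * ∑ j : Fin k, ∑ r : Fin n, ‖beta lam l j r x‖ := by
    rw [Finset.mul_sum]
    exact Finset.sum_congr rfl fun j _ => by rw [Finset.mul_sum]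
  rw [this]
  refine mul_le_mul_of_nonneg_left ?_ (norm_nonneg c)
  refine le_trans ?_ hBfK
  rw [hBf]
  exact Finset.single_le_sum (f := fun l => ∑ j : Fin k, ∑ r : Fin n, ‖beta lam l j r x‖)
    (fun t _ => by positivity) (Finset.mem_range.2 (by omega))



lemma analytic_Fn (lam : Fin k → ℂ) (p : Fin k → ℂ[X]) :
    AnalyticOnNhd ℝ (Fn lam p) Set.univ := by
  have hdiff : Differentiable ℂ (fun z : ℂ => ∑ j, (p j).eval z * Complex.exp (lam j * z)) :=
    Differentiable.fun_sum fun j _ =>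
      ((p j).differentiable).mul (Complex.differentiable_exp.comp (differentiable_id.const_mul _))
  have hFc : AnalyticOnNhd ℂ (fun z : ℂ => ∑ j, (p j).eval z * Complex.exp (lam j * z))
      Set.univ := (hdiff.differentiableOn).analyticOnNhd isOpen_univ
  have hof : AnalyticOnNhd ℝ (fun t : ℝ => (t:ℂ)) Set.univ :=
    Complex.ofRealCLM.analyticOnNhd Set.univ
  have hcomp := (hFc.restrictScalars (𝕜 := ℝ)).comp hof (Set.mapsTo_univ _ _)
  exact hcomp

lemma Fn_pow_zero_of_zero (lam : Fin k → ℂ) (p : Fin k → ℂ[X])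
    (h : Fn lam p = fun _ => 0) (i : ℕ) :
    Fn lam (fun j => ((Dop (lam j)) ^ i) (p j)) = fun _ => 0 := by
  induction i with
  | zero => simpa using h
  | succ i ih =>
      funext x
      have e : (fun j => ((Dop (lam j)) ^ (i+1)) (p j))
          = fun j => Dop (lam j) (((Dop (lam j)) ^ i) (p j)) := by
        funext j; rw [pow_succ', Module.End.mul_apply]
      rw [e, ← (hasDerivAt_Fn lam (fun j => ((Dop (lam j)) ^ i) (p j)) x).deriv, ih]
      simp

lemma Fn_zero_eval (lam : Fin k → ℂ) (q : Fin k → ℂ[X]) :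
    Fn lam q 0 = ∑ j, (q j).eval 0 := by
  simp [Fn]

lemma finite_zeros {n : ℕ} (lam : Fin k → ℂ) (hlam : Function.Injective lam)
    (p : Fin k → ℂ[X]) (hdeg : ∀ j, (p j).degree < n) (hp : ∃ j, p j ≠ 0) (a b : ℝ) :
    {t ∈ Set.Icc a b | Fn lam p t = 0}.Finite := by
  by_contra hinf
  rw [← Set.not_infinite, not_not] at hinf
  obtain ⟨x, _, hacc⟩ := hinf.exists_accPt_of_subset_isCompact isCompact_Icc
    (Set.sep_subset _ _)
  have hfreq : ∃ᶠ y in nhdsWithin x {x}ᶜ, Fn lam p y = 0 := by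
    rw [frequently_nhdsWithin_iff]
    have := accPt_iff_frequently.1 hacc
    exact this.mono (fun y hy => ⟨hy.2.2, hy.1⟩)
  have hEq := (analytic_Fn lam p).eqOn_zero_of_preconnected_of_frequently_eq_zero
    isPreconnected_univ (Set.mem_univ x) hfreq
  have hzero : Fn lam p = fun _ => 0 := funext fun t => hEq (Set.mem_univ t)
  have hW : ∀ i, W lam p i = 0 := by
    intro i
    have := Fn_pow_zero_of_zero lam p hzero i
    have h0 := congrFun this 0
    rw [Fn_zero_eval] at h0
    exact h0
  obtain ⟨j, hj⟩ := hp
  exact hj (OL n k lam hlam p hdeg (fun i _ => hW i) j)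


lemma Gt_zero (lam : Fin k → ℂ) (p : Fin k → ℂ[X]) (l : ℕ) :
    Gt lam p l 0 = W lam p l := by
  unfold Gt
  rw [Fn_zero_eval]
  rfl

lemma Gt_zero' (lam : Fin k → ℂ) (p : Fin k → ℂ[X]) (x : ℝ) :
    Gt lam p 0 x = Fn lam p x := by
  simp [Gt, pow_zero, Module.End.one_apply]

end QP
end

/-- A nontrivial quasi-polynomial `y(t) = ∑_{j<k} ∑_{r<n} c_{rj} e^{λⱼt} tʳ`, with
distinct exponents `λ₁,…,λ_k` (`k ≤ n`) and coefficients not all zero, has finitely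
many zeros on every compact interval; moreover there is `T₀ > 0`, depending only on
`n` and the `λⱼ`, such that every such nontrivial quasi-polynomial has at most `n·k`
zeros on `[−T₀, T₀]`. -/
theorem quasiPolynomial_finitely_many_zeros
    (n k : ℕ) (hk0 : 0 < k) (hk : k ≤ n)
    (lam : Fin k → ℂ) (hlam : Function.Injective lam) :
    (∀ c : Fin k → Fin n → ℂ, c ≠ 0 → ∀ a b : ℝ,
      {t ∈ Icc a b |
        ∑ j, ∑ r, c j r * Complex.exp (lam j * t) * (t : ℂ) ^ (r : ℕ) = 0}.Finite) ∧
    ∃ T₀ : ℝ, 0 < T₀ ∧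
      ∀ c : Fin k → Fin n → ℂ, c ≠ 0 →
        {t ∈ Icc (-T₀) T₀ |
          ∑ j, ∑ r, c j r * Complex.exp (lam j * t) * (t : ℂ) ^ (r : ℕ) = 0}.ncard
          ≤ n * k := by
  classical
  have hn0 : 0 < n := lt_of_lt_of_le hk0 hk
  have part1 : ∀ c : Fin k → Fin n → ℂ, c ≠ 0 → ∀ a b : ℝ,
      {t ∈ Icc a b |
        ∑ j, ∑ r, c j r * Complex.exp (lam j * t) * (t : ℂ) ^ (r : ℕ) = 0}.Finite := by
    intro c hc a b
    have hset : {t ∈ Icc a b |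
          ∑ j, ∑ r, c j r * Complex.exp (lam j * t) * (t : ℂ) ^ (r : ℕ) = 0}
        = {t ∈ Icc a b | QP.Fn lam (QP.pOf c) t = 0} := by
      ext t
      simp [QP.Fn_pOf]
    rw [hset]
    have hp : ∃ j, QP.pOf c j ≠ 0 := by
      by_contra h
      push_neg at h
      exact hc ((QP.pOf_eq_zero_iff c).1 h)
    exact QP.finite_zeros (n := n) lam hlam (QP.pOf c) (fun j => QP.degree_pOf_lt c j) hp a b
  refine ⟨part1, ?_⟩
  set N := n * k with hN
  have hinj : Function.Injective (QP.Phi (n := n) lam) := by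
    intro c c' h
    have h0 : QP.Phi (n := n) lam (c - c') = 0 := by rw [map_sub, h, sub_self]
    have hz : ∀ j, QP.pOf (c - c') j = 0 := by
      apply QP.OL n k lam hlam _ (fun j => QP.degree_pOf_lt _ j)
      intro i hi
      have := congrFun h0 ⟨i, hi⟩
      simpa [QP.Phi] using this
    exact sub_eq_zero.1 ((QP.pOf_eq_zero_iff _).1 hz)
  obtain ⟨ε, hε, heps⟩ := QP.exists_eps hk0 hn0 lam hinj
  obtain ⟨K, hK0, hKb⟩ := QP.exists_K (n := n) lam N
  set Q : ℝ := QP.Bc N * K * 2^(N+1) + 1 with hQ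
  have hBcN := QP.Bc_nonneg N
  have hQ0 : 0 < Q := by positivity
  set T : ℝ := min 1 (ε / (2*Q)) with hT
  have hT0 : 0 < T := lt_min one_pos (by positivity)
  refine ⟨T, hT0, ?_⟩
  intro c hc
  by_contra hcard
  push_neg at hcard
  have hT1 : T ≤ 1 := min_le_left _ _
  have hTQ : T ≤ ε/(2*Q) := min_le_right _ _
  have hfin := part1 c hc (-T) T
  have hNle : N ≤ {t ∈ Icc (-T) T |
      ∑ j, ∑ r, c j r * Complex.exp (lam j * t) * (t : ℂ) ^ (r : ℕ) = 0}.ncard := by omega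
  rw [Set.ncard_eq_toFinset_card _ hfin] at hNle
  obtain ⟨S, hSsub, hScard⟩ := Finset.exists_subset_card_eq hNle
  set p : Fin k → Polynomial ℂ := QP.pOf c with hp
  set G : ℕ → ℝ → ℂ := QP.Gt lam p with hG
  have hGtower : ∀ l x, HasDerivAt (G l) (G (l+1) x) x := QP.Gt_tower lam p
  have hmemZ : ∀ x ∈ S, x ∈ Icc (-T) T ∧
      ∑ j, ∑ r, c j r * Complex.exp (lam j * x) * (x : ℂ) ^ (r : ℕ) = 0 := by
    intro x hx
    have := hSsub hx
    rwa [Set.Finite.mem_toFinset] at this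
  have hSsub' : (↑S : Set ℝ) ⊆ Icc (-T) T := fun x hx => (hmemZ x hx).1
  have hSz : ∀ x ∈ S, G 0 x = 0 := by
    intro x hx
    rw [hG, QP.Gt_zero', QP.Fn_pOf]
    exact (hmemZ x hx).2
  have hIccsub : Icc (-T) T ⊆ Icc (-1:ℝ) 1 := by
    intro x hx
    exact ⟨by linarith [hx.1], by linarith [hx.2]⟩
  have hCb : ∀ x ∈ Icc (-T) T, ‖G N x‖ ≤ ‖c‖ * K := by
    intro x hx
    exact hKb N le_rfl c x (hIccsub hx)
  have hKL := QP.KL N G hGtower (-T) T (by linarith) (by linarith)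
    S hSsub' hSz hScard (‖c‖ * K) hCb
  -- bound each coordinate of Phi c
  have hPhiG : ∀ l : Fin N, QP.Phi (n := n) lam c l = G l 0 := by
    intro l
    rw [hG, QP.Gt_zero]
    rfl
  have hTT : T - (-T) = 2*T := by ring
  have hcoord : ∀ l : Fin N, ‖QP.Phi (n := n) lam c l‖ ≤ Q * T * ‖c‖ := by
    intro l
    have h1 := hKL l (le_of_lt l.2)
    rw [hTT] at h1
    rw [hPhiG l]
    refine le_trans h1 ?_
    obtain ⟨m, hm⟩ : ∃ m, N - (l:ℕ) = m + 1 := ⟨N - l - 1, by omega⟩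
    rw [hm]
    have hpow : (2*T)^(m+1) ≤ 2^(N+1) * T := by
      have h2 : (2*T)^m ≤ 2^m := pow_le_pow_left₀ (by linarith) (by linarith) m
      have h3 : (2:ℝ)^m ≤ 2^N := pow_le_pow_right₀ (by norm_num) (by omega)
      calc (2*T)^(m+1) = (2*T)^m * (2*T) := by rw [pow_succ]
        _ ≤ 2^N * (2*T) := by nlinarith
        _ = 2^(N+1) * T := by rw [pow_succ]; ring
    have hKc : 0 ≤ ‖c‖ * K := mul_nonneg (norm_nonneg _) hK0
    calc QP.Bc N * (‖c‖ * K) * (2*T)^(m+1)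
        ≤ QP.Bc N * (‖c‖ * K) * (2^(N+1) * T) := by
          refine mul_le_mul_of_nonneg_left hpow (mul_nonneg hBcN hKc)
      _ = (QP.Bc N * K * 2^(N+1)) * T * ‖c‖ := by ring
      _ ≤ Q * T * ‖c‖ := by
          rw [hQ]
          nlinarith [norm_nonneg c, hT0.le, mul_nonneg hT0.le (norm_nonneg c)]
  have hnorm : ‖QP.Phi (n := n) lam c‖ ≤ Q * T * ‖c‖ := by
    refine (pi_norm_le_iff_of_nonneg (by positivity)).2 hcoord
  have h1 : ε * ‖c‖ ≤ Q * T * ‖c‖ := le_trans (heps c) hnorm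
  have hcpos : 0 < ‖c‖ := norm_pos_iff.2 hc
  have hQT : Q * T ≤ ε/2 := by
    have := mul_le_mul_of_nonneg_left hTQ hQ0.le
    calc Q * T ≤ Q * (ε/(2*Q)) := this
      _ = ε/2 := by field_simp
  have h2 := mul_le_mul_of_nonneg_right hQT hcpos.le
  nlinarith [mul_pos hε hcpos]
end

section
/- Let v ∈ ℝ^n and suppose B* e^{s A*} v = 0 for all s in a set of at least n+1 distinct points in [0, T₀], where every nontrivial quasi-polynomial built from the eigenvalues of A with polynomial degrees less than n has at most n zeros on [0, T₀]. Then the function s ↦ B* e^{s A*} v vanishes identically on [0, T₀], and if additionally the rank condition Rank[B, AB, ..., A^{n-1}B] = n holds, then v = 0. -/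
open Matrix Set
open NormedSpace


private lemma charpoly_isRoot_aux {n : ℕ} {M : Matrix (Fin n) (Fin n) ℂ}
    {μ : ℂ} {y : Fin n → ℂ} (hy : y ≠ 0) {k : ℕ} (h : ((M - μ • 1) ^ k) *ᵥ y = 0) :
    M.charpoly.IsRoot μ := by
  rcases Nat.eq_zero_or_pos k with rfl | hk
  · simp only [pow_zero, Matrix.one_mulVec] at h
    exact absurd h hy
  have hdet : ((M - μ • 1) ^ k).det = 0 := (Matrix.exists_mulVec_eq_zero_iff).mp ⟨y, hy, h⟩
  rw [Matrix.det_pow] at hdet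
  have hdet0 : (M - μ • 1).det = 0 := pow_eq_zero_iff hk.ne' |>.mp hdet
  have heval : M.charpoly.eval μ = (Matrix.scalar (Fin n) μ - M).det := by
    rw [Matrix.charpoly, _root_.eval_det, Matrix.matPolyEquiv_charmatrix]
    simp
  rw [Polynomial.IsRoot, heval]
  have : Matrix.scalar (Fin n) μ - M = -(M - μ • 1) := by
    rw [Matrix.scalar_apply, ← Matrix.smul_one_eq_diagonal]
    exact (neg_sub _ _).symm
  rw [this, Matrix.det_neg, hdet0, mul_zero]


private lemma exp_smul_mulVec_repr {n : ℕ} (M : Matrix (Fin n) (Fin n) ℂ) (x : Fin n → ℂ) :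
    ∃ w : ℂ →₀ (Fin n → ℂ),
      (∀ μ, ((M - μ • 1) ^ n) *ᵥ w μ = 0) ∧
      (∀ u : ℝ, exp ((u : ℂ) • M) *ᵥ x =
        ∑ μ ∈ w.support, ∑ r ∈ Finset.range n,
          (Complex.exp (μ * u) * ((r.factorial : ℂ)⁻¹ * (u : ℂ) ^ r)) •
            ((M - μ • 1) ^ r *ᵥ w μ)) := by
  letI : SeminormedRing (Matrix (Fin n) (Fin n) ℂ) := Matrix.linftyOpSemiNormedRing
  letI : NormedRing (Matrix (Fin n) (Fin n) ℂ) := Matrix.linftyOpNormedRing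
  letI : NormedAlgebra ℂ (Matrix (Fin n) (Fin n) ℂ) := Matrix.linftyOpNormedAlgebra
  set φ : Module.End ℂ (Fin n → ℂ) := Matrix.toLinAlgEquiv' M with hφ
  have hxtop : x ∈ ⨆ μ : ℂ, φ.maxGenEigenspace μ := by
    rw [Module.End.iSup_maxGenEigenspace_eq_top φ]; trivial
  rw [Submodule.mem_iSup_iff_exists_finsupp] at hxtop
  obtain ⟨w, hw, hsum⟩ := hxtop
  have key : ∀ (μ : ℂ) (k : ℕ) (y : Fin n → ℂ),
      ((φ - μ • 1) ^ k) y = ((M - μ • 1) ^ k) *ᵥ y := by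
    intro μ k y
    have h1 : (φ - μ • (1 : Module.End ℂ (Fin n → ℂ))) = Matrix.toLinAlgEquiv' (M - μ • 1) := by
      rw [map_sub, _root_.map_smul, _root_.map_one, hφ]
    rw [h1, ← map_pow, Matrix.toLinAlgEquiv'_apply]
  have hnil : ∀ μ, ((M - μ • 1) ^ n) *ᵥ w μ = 0 := by
    intro μ
    have h1 := hw μ
    rw [Module.End.maxGenEigenspace_eq_genEigenspace_finrank, Module.End.mem_genEigenspace_nat,
      LinearMap.mem_ker] at h1
    rw [← key]
    rw [Module.finrank_fin_fun] at h1
    exact h1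
  refine ⟨w, hnil, fun u => ?_⟩
  have hterm : ∀ μ ∈ w.support, exp ((u : ℂ) • M) *ᵥ w μ =
      ∑ r ∈ Finset.range n,
        (Complex.exp (μ * u) * ((r.factorial : ℂ)⁻¹ * (u : ℂ) ^ r)) •
          ((M - μ • 1) ^ r *ᵥ w μ) := by
    intro μ _
    set N : Matrix (Fin n) (Fin n) ℂ := M - μ • 1 with hN
    have hsplit : (u : ℂ) • M = ((u : ℂ) * μ) • (1 : Matrix (Fin n) (Fin n) ℂ) + (u : ℂ) • N := by
      rw [hN, smul_sub, ← smul_smul]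
      abel
    have hcomm : Commute (((u : ℂ) * μ) • (1 : Matrix (Fin n) (Fin n) ℂ)) ((u : ℂ) • N) :=
      ((Commute.one_left _).smul_left _).smul_right _
    have h1 : exp (((u : ℂ) * μ) • (1 : Matrix (Fin n) (Fin n) ℂ)) =
        Complex.exp ((u : ℂ) * μ) • 1 := by
      rw [← Algebra.algebraMap_eq_smul_one, Complex.exp_eq_exp_ℂ, ← Algebra.algebraMap_eq_smul_one]
      exact (NormedSpace.algebraMap_exp_comm _).symm
    let L : Matrix (Fin n) (Fin n) ℂ →ₗ[ℂ] (Fin n → ℂ) :=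
      { toFun := fun X => X *ᵥ w μ
        map_add' := fun X Y => Matrix.add_mulVec _ _ _
        map_smul' := fun c X => Matrix.smul_mulVec c X (w μ) }
    let L' : Matrix (Fin n) (Fin n) ℂ →L[ℂ] (Fin n → ℂ) := LinearMap.toContinuousLinearMap L
    have h2 : exp ((u : ℂ) • N) *ᵥ w μ =
        ∑ r ∈ Finset.range n, ((r.factorial : ℂ)⁻¹ * (u : ℂ) ^ r) • (N ^ r *ᵥ w μ) := by
      have hLapp : ∀ X : Matrix (Fin n) (Fin n) ℂ, L' X = X *ᵥ w μ := fun _ => rfl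
      have hsummable : Summable fun k : ℕ => (k.factorial : ℂ)⁻¹ • ((u : ℂ) • N) ^ k :=
        expSeries_summable' ((u : ℂ) • N)
      calc exp ((u : ℂ) • N) *ᵥ w μ
          = L' (∑' k : ℕ, (k.factorial : ℂ)⁻¹ • ((u : ℂ) • N) ^ k) := by
            rw [hLapp, exp_eq_tsum ℂ]
        _ = ∑' k : ℕ, L' ((k.factorial : ℂ)⁻¹ • ((u : ℂ) • N) ^ k) := L'.map_tsum hsummable
        _ = ∑' k : ℕ, ((k.factorial : ℂ)⁻¹ * (u : ℂ) ^ k) • (N ^ k *ᵥ w μ) := by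
            congr 1; funext k
            rw [hLapp, smul_pow, ← smul_smul, Matrix.smul_mulVec,
              Matrix.smul_mulVec]
        _ = ∑ r ∈ Finset.range n, ((r.factorial : ℂ)⁻¹ * (u : ℂ) ^ r) • (N ^ r *ᵥ w μ) := by
            refine tsum_eq_sum fun k hk => ?_
            have hkn : n ≤ k := Nat.le_of_not_lt (Finset.mem_range.not.mp hk)
            have : N ^ k *ᵥ w μ = 0 := by
              have hsp : N ^ k = N ^ (k - n) * N ^ n := by
                rw [← pow_add, Nat.sub_add_cancel hkn]
              rw [hsp, ← Matrix.mulVec_mulVec, hnil μ, Matrix.mulVec_zero]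
            rw [this, smul_zero]
    rw [hsplit, exp_add_of_commute _ _ hcomm, h1, Matrix.smul_mul, Matrix.one_mul,
      Matrix.smul_mulVec, h2, Finset.smul_sum]
    refine Finset.sum_congr rfl fun r _ => ?_
    rw [smul_smul, mul_comm (u : ℂ) μ]
  calc exp ((u : ℂ) • M) *ᵥ x = exp ((u : ℂ) • M) *ᵥ (∑ μ ∈ w.support, w μ) := by
        rw [← hsum]; rfl
    _ = ∑ μ ∈ w.support, exp ((u : ℂ) • M) *ᵥ w μ := by
        simp only [← Matrix.mulVecLin_apply, map_sum]
    _ = _ := Finset.sum_congr rfl hterm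


private lemma qp_zero_of_infinite_zeros {f : ℂ → ℂ} (hf : Differentiable ℂ f) {T₀ : ℝ}
    {Z : Set ℝ} (hZ : Z.Infinite) (hZsub : Z ⊆ Icc (0:ℝ) T₀) (hZzero : ∀ x ∈ Z, f x = 0) :
    ∀ z : ℂ, f z = 0 := by
  obtain ⟨x₀, -, hacc⟩ := hZ.exists_accPt_of_subset_isCompact isCompact_Icc hZsub
  have hfreq : ∃ᶠ y in nhds x₀, y ≠ x₀ ∧ y ∈ Z := (accPt_iff_frequently (x := x₀) (C := Z)).mp hacc
  have htend : Filter.Tendsto (fun x : ℝ => (x : ℂ)) (nhds x₀) (nhds (x₀ : ℂ)) :=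
    Complex.continuous_ofReal.tendsto x₀
  have hfreq' : ∃ᶠ z in nhds (x₀ : ℂ), f z = 0 ∧ z ∈ ({(x₀ : ℂ)}ᶜ : Set ℂ) := by
    refine htend.frequently (hfreq.mono fun x hx => ?_)
    refine ⟨hZzero x hx.2, ?_⟩
    simp only [Set.mem_compl_iff, Set.mem_singleton_iff]
    exact fun h => hx.1 (Complex.ofReal_injective h)
  rw [← frequently_nhdsWithin_iff] at hfreq'
  have han : AnalyticOnNhd ℂ f Set.univ := Complex.analyticOnNhd_univ_iff_differentiable.mpr hf
  have := han.eqOn_zero_of_preconnected_of_frequently_eq_zero isPreconnected_univ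
    (Set.mem_univ (x₀ : ℂ)) hfreq'
  exact fun z => this (Set.mem_univ z)


private lemma charpoly_transpose' {n : ℕ} (M : Matrix (Fin n) (Fin n) ℂ) :
    Mᵀ.charpoly = M.charpoly := by
  rw [Matrix.charpoly, Matrix.charpoly, ← Matrix.det_transpose (charmatrix M)]
  congr 1
  ext i j
  by_cases h : i = j
  · subst h; simp [Matrix.charmatrix_apply, Matrix.transpose_apply]
  · simp [Matrix.charmatrix_apply, Matrix.transpose_apply, Matrix.diagonal_apply_ne _ h,
      Matrix.diagonal_apply_ne' _ h]

private lemma exp_map_ofReal {n : ℕ} (X : Matrix (Fin n) (Fin n) ℝ) :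
    (exp X).map Complex.ofReal = exp (X.map Complex.ofReal) := by
  letI : SeminormedRing (Matrix (Fin n) (Fin n) ℝ) := Matrix.linftyOpSemiNormedRing
  letI : NormedRing (Matrix (Fin n) (Fin n) ℝ) := Matrix.linftyOpNormedRing
  letI : NormedAlgebra ℝ (Matrix (Fin n) (Fin n) ℝ) := Matrix.linftyOpNormedAlgebra
  letI : NormedAlgebra ℚ (Matrix (Fin n) (Fin n) ℝ) := Matrix.linftyOpNormedAlgebra
  letI : SeminormedRing (Matrix (Fin n) (Fin n) ℂ) := Matrix.linftyOpSemiNormedRing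
  letI : NormedRing (Matrix (Fin n) (Fin n) ℂ) := Matrix.linftyOpNormedRing
  letI : NormedAlgebra ℝ (Matrix (Fin n) (Fin n) ℂ) := Matrix.linftyOpNormedAlgebra
  letI : NormedAlgebra ℂ (Matrix (Fin n) (Fin n) ℂ) := Matrix.linftyOpNormedAlgebra
  have hcont : Continuous fun Y : Matrix (Fin n) (Fin n) ℝ => Y.map Complex.ofReal :=
    continuous_id.matrix_map Complex.continuous_ofReal
  have h1 : ((Complex.ofRealHom : ℝ →+* ℂ).mapMatrix (exp X)) =
      exp ((Complex.ofRealHom : ℝ →+* ℂ).mapMatrix X) :=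
    map_exp ((Complex.ofRealHom : ℝ →+* ℂ).mapMatrix) hcont X
  have h2 : (exp : Matrix (Fin n) (Fin n) ℂ → _) = exp := rfl
  exact h1

/-- If `B* e^{sA*} v` vanishes at `n+1` distinct points of `[0, T₀]`, where `T₀` is such
that every nontrivial quasi-polynomial built from the eigenvalues of `A` with polynomial
degrees `< n` has at most `n` zeros on `[0, T₀]`, then `s ↦ B* e^{sA*} v` vanishes
identically on `[0, T₀]`; if moreover the Kalman rank condition holds, then `v = 0`. -/
theorem vanishing_quasiPolynomial_implies_zero
    (n d : ℕ) (A : Matrix (Fin n) (Fin n) ℝ) (B : Matrix (Fin n) (Fin d) ℝ)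
    (v : EuclideanSpace ℝ (Fin n)) (T₀ : ℝ) (hT₀ : 0 < T₀)
    (hQP : ∀ c : ℂ → Fin n → ℂ,
      (∀ lam : ℂ, lam ∉ (A.map (Complex.ofReal : ℝ → ℂ)).charpoly.roots.toFinset →
        c lam = 0) →
      c ≠ 0 →
      {s ∈ Icc (0:ℝ) T₀ |
        ∑ lam ∈ (A.map (Complex.ofReal : ℝ → ℂ)).charpoly.roots.toFinset,
          ∑ r, c lam r * Complex.exp (lam * s) * (s : ℂ) ^ (r : ℕ) = 0}.ncard ≤ n)
    (s : Fin (n + 1) → ℝ) (hs : Function.Injective s)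
    (hs' : ∀ j, s j ∈ Icc (0:ℝ) T₀)
    (hv : ∀ j, Matrix.toEuclideanLin (Bᵀ * NormedSpace.exp (s j • Aᵀ)) v = 0) :
    (∀ u ∈ Icc (0:ℝ) T₀,
        Matrix.toEuclideanLin (Bᵀ * NormedSpace.exp (u • Aᵀ)) v = 0) ∧
      ((Matrix.of fun (i : Fin n) (jk : Fin n × Fin d) =>
          (A ^ (jk.1 : ℕ) * B) i jk.2).rank = n → v = 0) := by
  classical
  set v' : Fin n → ℝ := (WithLp.equiv 2 (Fin n → ℝ)) v with hv'
  set vc : Fin n → ℂ := fun k => ((v' k : ℝ) : ℂ) with hvc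
  set MC : Matrix (Fin n) (Fin n) ℂ := Aᵀ.map Complex.ofReal with hMC
  set roots : Finset ℂ := (A.map (Complex.ofReal : ℝ → ℂ)).charpoly.roots.toFinset with hroots
  -- bridge between real and complex pictures
  have hmain_eq : ∀ u : ℝ, ((Bᵀ * exp (u • Aᵀ)).map Complex.ofReal) *ᵥ vc
      = (Bᵀ.map Complex.ofReal) *ᵥ (exp ((u:ℂ) • MC) *ᵥ vc) := by
    intro u
    have h1 : (u • Aᵀ).map Complex.ofReal = (u:ℂ) • MC := by
      ext i j
      simp [hMC, Matrix.map_apply]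
    have hmul : (Bᵀ * exp (u • Aᵀ)).map Complex.ofReal
        = Bᵀ.map Complex.ofReal * (exp (u • Aᵀ)).map Complex.ofReal :=
      Matrix.map_mul (f := Complex.ofRealHom)
    rw [hmul, exp_map_ofReal, h1, Matrix.mulVec_mulVec]
  have hreal_iff : ∀ (P : Matrix (Fin d) (Fin n) ℝ),
      P *ᵥ v' = 0 ↔ ∀ i, ((P.map Complex.ofReal) *ᵥ vc) i = 0 := by
    intro P
    have h1 : ∀ i, Complex.ofRealHom ((P *ᵥ v') i) = ((P.map Complex.ofReal) *ᵥ vc) i :=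
      fun i => RingHom.map_mulVec Complex.ofRealHom P v' i
    constructor
    · intro h i
      rw [← h1 i, h]
      simp
    · intro h
      funext i
      have h2 := h i
      rw [← h1 i] at h2
      simp only [Pi.zero_apply]
      exact Complex.ofReal_eq_zero.mp h2
  have hEuc0 : ∀ (P : Matrix (Fin d) (Fin n) ℝ),
      Matrix.toEuclideanLin P v = 0 ↔ P *ᵥ v' = 0 := by
    intro P
    rw [Matrix.toEuclideanLin_apply]
    simp [hv']
  -- quasipolynomial representation
  obtain ⟨w, hnil, hrepr⟩ := exp_smul_mulVec_repr MC vc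
  have hroot : ∀ μ, w μ ≠ 0 → μ ∈ roots := by
    intro μ hμ
    have h1 : MC.charpoly.IsRoot μ := charpoly_isRoot_aux hμ (hnil μ)
    have h2 : MC.charpoly = (A.map (Complex.ofReal : ℝ → ℂ)).charpoly := by
      have h3 : MC = (A.map (Complex.ofReal : ℝ → ℂ))ᵀ := by
        ext i j; simp [hMC, Matrix.map_apply]
      rw [h3, charpoly_transpose']
    rw [hroots, Multiset.mem_toFinset,
      Polynomial.mem_roots (A.map (Complex.ofReal : ℝ → ℂ)).charpoly_monic.ne_zero]
    exact h2 ▸ h1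
  -- coefficients
  set c : Fin d → ℂ → Fin n → ℂ := fun i μ r =>
    if w μ ≠ 0 then
      (((r : ℕ).factorial : ℂ))⁻¹ *
        ((Bᵀ.map Complex.ofReal) *ᵥ ((MC - μ • 1) ^ (r : ℕ) *ᵥ w μ)) i
    else 0 with hc
  have hsupp : ∀ i, ∀ lam : ℂ, lam ∉ roots → c i lam = 0 := by
    intro i lam hlam
    funext r
    have hwμ : w lam = 0 := by
      by_contra hw
      exact hlam (hroot lam hw)
    simp [hc, hwμ]
  have hQrepr : ∀ (i : Fin d) (u : ℝ),
      ((Bᵀ.map Complex.ofReal) *ᵥ (exp ((u:ℂ) • MC) *ᵥ vc)) i =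
        ∑ μ ∈ roots, ∑ r : Fin n,
          c i μ r * Complex.exp (μ * u) * (u : ℂ) ^ (r : ℕ) := by
    intro i u
    have step1 : ((Bᵀ.map Complex.ofReal) *ᵥ (exp ((u:ℂ) • MC) *ᵥ vc)) i =
        ∑ μ ∈ w.support, ∑ r ∈ Finset.range n,
          (Complex.exp (μ * u) * ((r.factorial : ℂ)⁻¹ * (u : ℂ) ^ r)) *
            ((Bᵀ.map Complex.ofReal) *ᵥ ((MC - μ • 1) ^ r *ᵥ w μ)) i := by
      rw [hrepr u, ← Matrix.mulVecLin_apply, map_sum]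
      simp only [map_sum, _root_.map_smul, Matrix.mulVecLin_apply, Finset.sum_apply,
        Pi.smul_apply, smul_eq_mul]
    rw [step1]
    rw [Finset.sum_subset (fun μ hμ => hroot μ (Finsupp.mem_support_iff.mp hμ))
      (fun μ _ hμ => ?_)]
    · refine Finset.sum_congr rfl fun μ _ => ?_
      by_cases hwμ : w μ = 0
      · simp [hc, hwμ]
      · rw [← Fin.sum_univ_eq_sum_range (fun r =>
          (Complex.exp (μ * u) * ((r.factorial : ℂ)⁻¹ * (u : ℂ) ^ r)) *
            ((Bᵀ.map Complex.ofReal) *ᵥ ((MC - μ • 1) ^ r *ᵥ w μ)) i) n]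
        refine Finset.sum_congr rfl fun r _ => ?_
        rw [hc]
        simp only [ne_eq, hwμ, not_false_eq_true, if_pos]
        ring
    · have hwμ : w μ = 0 := Finsupp.notMem_support_iff.mp hμ
      simp [hwμ]
  have hQ : ∀ (i : Fin d) (u : ℝ),
      ((Bᵀ.map Complex.ofReal) *ᵥ (exp ((u:ℂ) • MC) *ᵥ vc)) i = 0 := by
    intro i
    suffices hQP0 : ∀ u : ℝ, ∑ μ ∈ roots, ∑ r : Fin n,
        c i μ r * Complex.exp (μ * u) * (u : ℂ) ^ (r : ℕ) = 0 by
      intro u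
      rw [hQrepr i u]
      exact hQP0 u
    set S : Set ℝ := {x ∈ Icc (0:ℝ) T₀ | ∑ μ ∈ roots, ∑ r : Fin n,
        c i μ r * Complex.exp (μ * x) * (x : ℂ) ^ (r : ℕ) = 0} with hSdef
    have hpts : ∀ j, s j ∈ S := by
      intro j
      refine ⟨hs' j, ?_⟩
      rw [← hQrepr i (s j)]
      have h1 : (Bᵀ * exp (s j • Aᵀ)) *ᵥ v' = 0 := (hEuc0 _).mp (hv j)
      have h2 := (hreal_iff _).mp h1 i
      rw [hmain_eq (s j)] at h2
      exact h2
    by_cases hinf : S.Infinite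
    · have hdiff : Differentiable ℂ (fun z : ℂ => ∑ μ ∈ roots, ∑ r : Fin n,
          c i μ r * Complex.exp (μ * z) * z ^ (r : ℕ)) := by
        refine Differentiable.fun_sum fun μ _ => Differentiable.fun_sum fun r _ => ?_
        exact ((differentiable_const _).mul
          (Complex.differentiable_exp.comp (differentiable_id.const_mul μ))).mul
            (differentiable_pow _)
      have hzero := qp_zero_of_infinite_zeros hdiff hinf
        (fun x hx => hx.1) (fun x hx => hx.2)
      intro u
      exact hzero u
    · by_cases hci : c i = 0
      · intro u
        simp [hci]
      · exfalso
        have hcard := hQP (c i) (hsupp i) hci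
        have hfin : S.Finite := Set.not_infinite.mp hinf
        have hsub2 : Set.range s ⊆ S := by
          rintro x ⟨j, rfl⟩
          exact hpts j
        have h1 : (Set.range s).ncard ≤ S.ncard := Set.ncard_le_ncard hsub2 hfin
        have h2 : (Set.range s).ncard = n + 1 := by
          rw [← Set.image_univ, Set.ncard_image_of_injective _ hs, Set.ncard_univ,
            Nat.card_eq_fintype_card, Fintype.card_fin]
        have h3 : S.ncard ≤ n := hcard
        omega
  -- real vanishing for every u : ℝ
  have g0 : ∀ u : ℝ, (Bᵀ * exp (u • Aᵀ)) *ᵥ v' = 0 := by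
    intro u
    refine (hreal_iff _).mpr fun i => ?_
    rw [hmain_eq u]
    exact hQ i u
  constructor
  · intro u _
    exact (hEuc0 _).mpr (g0 u)
  · intro hrank
    letI : SeminormedRing (Matrix (Fin n) (Fin n) ℝ) := Matrix.linftyOpSemiNormedRing
    letI : NormedRing (Matrix (Fin n) (Fin n) ℝ) := Matrix.linftyOpNormedRing
    letI : NormedAlgebra ℝ (Matrix (Fin n) (Fin n) ℝ) := Matrix.linftyOpNormedAlgebra
    have gk : ∀ k : ℕ, ∀ u : ℝ, (Bᵀ * ((Aᵀ) ^ k * exp (u • Aᵀ))) *ᵥ v' = 0 := by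
      intro k
      induction k with
      | zero =>
        intro u
        simpa [Matrix.one_mul] using g0 u
      | succ k ih =>
        intro u
        let L : Matrix (Fin n) (Fin n) ℝ →ₗ[ℝ] (Fin d → ℝ) :=
          { toFun := fun X => (Bᵀ * ((Aᵀ) ^ k * X)) *ᵥ v'
            map_add' := by
              intro X Y
              show (Bᵀ * ((Aᵀ) ^ k * (X + Y))) *ᵥ v'
                  = (Bᵀ * ((Aᵀ) ^ k * X)) *ᵥ v' + (Bᵀ * ((Aᵀ) ^ k * Y)) *ᵥ v'
              rw [Matrix.mul_add, Matrix.mul_add, Matrix.add_mulVec]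
            map_smul' := by
              intro cc X
              show (Bᵀ * ((Aᵀ) ^ k * (cc • X))) *ᵥ v' = cc • ((Bᵀ * ((Aᵀ) ^ k * X)) *ᵥ v')
              rw [Matrix.mul_smul, Matrix.mul_smul, Matrix.smul_mulVec] }
        let L' : Matrix (Fin n) (Fin n) ℝ →L[ℝ] (Fin d → ℝ) := LinearMap.toContinuousLinearMap L
        have hde : HasDerivAt (fun t : ℝ => L' (exp (t • Aᵀ))) (L' (Aᵀ * exp (u • Aᵀ))) u :=
          (L'.hasFDerivAt).comp_hasDerivAt u (hasDerivAt_exp_smul_const' Aᵀ u)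
        have hconst : (fun t : ℝ => L' (exp (t • Aᵀ))) = fun _ => (0 : Fin d → ℝ) :=
          funext fun t => ih t
        rw [hconst] at hde
        have h0 : HasDerivAt (fun _ : ℝ => (0 : Fin d → ℝ)) 0 u := hasDerivAt_const u 0
        have huniq : (0 : Fin d → ℝ) = L' (Aᵀ * exp (u • Aᵀ)) := h0.unique hde
        have hL : L' (Aᵀ * exp (u • Aᵀ)) = (Bᵀ * ((Aᵀ) ^ (k + 1) * exp (u • Aᵀ))) *ᵥ v' := by
          show (Bᵀ * ((Aᵀ) ^ k * (Aᵀ * exp (u • Aᵀ)))) *ᵥ v' = _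
          rw [← Matrix.mul_assoc ((Aᵀ) ^ k), ← pow_succ]
        rw [← hL, ← huniq]
    have hBk : ∀ k : ℕ, (Bᵀ * (Aᵀ) ^ k) *ᵥ v' = 0 := by
      intro k
      have h1 := gk k 0
      rw [zero_smul, exp_zero, Matrix.mul_one] at h1
      exact h1
    have hvK : v' ᵥ* (Matrix.of fun (i : Fin n) (jk : Fin n × Fin d) =>
        (A ^ (jk.1 : ℕ) * B) i jk.2) = 0 := by
      funext jk
      have h1 := congrFun (hBk jk.1) jk.2
      have h2 : Bᵀ * (Aᵀ) ^ (jk.1 : ℕ) = (A ^ (jk.1 : ℕ) * B)ᵀ := by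
        rw [Matrix.transpose_mul, Matrix.transpose_pow]
      rw [h2] at h1
      simp only [Matrix.mulVec, Matrix.vecMul, dotProduct, Matrix.transpose_apply,
        Matrix.of_apply, Pi.zero_apply] at h1 ⊢
      rw [← h1]
      exact Finset.sum_congr rfl fun x _ => mul_comm _ _
    set K : Matrix (Fin n) (Fin n × Fin d) ℝ :=
      Matrix.of fun (i : Fin n) (jk : Fin n × Fin d) => (A ^ (jk.1 : ℕ) * B) i jk.2 with hK
    have hsurj : LinearMap.range K.mulVecLin = ⊤ := by
      apply Submodule.eq_top_of_finrank_eq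
      have : Module.finrank ℝ (LinearMap.range K.mulVecLin) = K.rank := rfl
      rw [this, hrank, Module.finrank_fin_fun]
    obtain ⟨x, hx⟩ : ∃ x, K *ᵥ x = v' := by
      have h1 : v' ∈ LinearMap.range K.mulVecLin := hsurj ▸ Submodule.mem_top
      obtain ⟨x, hx⟩ := h1
      exact ⟨x, hx⟩
    have hvv : v' ⬝ᵥ v' = 0 := by
      calc v' ⬝ᵥ v' = v' ⬝ᵥ (K *ᵥ x) := by rw [hx]
        _ = (v' ᵥ* K) ⬝ᵥ x := dotProduct_mulVec _ _ _
        _ = 0 := by rw [hvK, zero_dotProduct]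
    have hv0 : v' = 0 := dotProduct_self_eq_zero.mp hvv
    have hfinal : v = (WithLp.equiv 2 (Fin n → ℝ)).symm v' := (Equiv.symm_apply_apply _ _).symm
    rw [hfinal, hv0]
    simp
end

section
/- Let μ_t be a Borel probability measure on ℝ^n and define the Markov operator P_t f(x) = ∫_{ℝ^n} f(e^{tA} x + y) μ_t(dy) for f Borel and bounded. Then P_t maps bounded Borel functions to continuous functions if and only if μ_t is absolutely continuous with respect to the Lebesgue measure. -/
open MeasureTheory Matrix Filter Pointwise Topology

variable {n : ℕ}

lemma aux_cont (μ : Measure (EuclideanSpace ℝ (Fin n))) [IsProbabilityMeasure μ]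
    (hac : μ ≪ volume) (f : EuclideanSpace ℝ (Fin n) → ℝ) (hf : Measurable f)
    (M : ℝ) (hM : ∀ x, |f x| ≤ M) :
    Continuous (fun x => ∫ y, f (x + y) ∂μ) := by
  have hM0 : 0 ≤ M := (abs_nonneg _).trans (hM 0)
  set ρ : EuclideanSpace ℝ (Fin n) → ℝ := fun y => (μ.rnDeriv volume y).toReal with hρ
  have hρmeas : Measurable ρ := (Measure.measurable_rnDeriv μ volume).ennreal_toReal
  have hρint : Integrable ρ volume := Measure.integrable_toReal_rnDeriv
  -- rewrite the integral as a "convolution"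
  have key : ∀ x, ∫ y, f (x + y) ∂μ = ∫ z, f z * ρ (z - x) ∂volume := by
    intro x
    rw [← integral_rnDeriv_smul hac (f := fun y => f (x + y))]
    rw [← integral_sub_right_eq_self
      (fun z => (μ.rnDeriv volume z).toReal • f (x + z)) (μ := volume) x]
    congr 1
    ext z
    have : x + (z - x) = z := by abel
    rw [this, smul_eq_mul, mul_comm]
  -- choose approximating sequence
  have happrox : ∀ k : ℕ, ∃ g : EuclideanSpace ℝ (Fin n) → ℝ,
      HasCompactSupport g ∧ (∫ z, ‖ρ z - g z‖ ∂volume) ≤ ((k : ℝ) + 1)⁻¹ ∧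
      Continuous g ∧ Integrable g volume := by
    intro k
    exact hρint.exists_hasCompactSupport_integral_sub_le (by positivity)
  choose g hg1 hg2 hg3 hg4 using happrox
  -- each approximate operator is continuous
  have contF : ∀ k, Continuous (fun x => ∫ z, f z * g k (z - x) ∂volume) := by
    intro k
    rw [continuous_iff_continuousAt]
    intro x₀
    obtain ⟨C, hC⟩ := (hg1 k).exists_bound_of_continuous (hg3 k)
    have hC0 : 0 ≤ C := (norm_nonneg _).trans (hC 0)
    set K : Set (EuclideanSpace ℝ (Fin n)) := Metric.closedBall x₀ 1 + tsupport (g k) with hK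
    have hKc : IsCompact K := (isCompact_closedBall _ _).add (hg1 k)
    apply continuousAt_of_dominated (bound := K.indicator fun _ => M * C)
    · refine Eventually.of_forall fun x => ?_
      exact (hf.mul (((hg3 k).measurable).comp (measurable_id.sub_const x))).aestronglyMeasurable
    · filter_upwards [Metric.closedBall_mem_nhds x₀ one_pos] with x hx
      refine Eventually.of_forall fun z => ?_
      by_cases hz : g k (z - x) = 0
      · simp only [hz, mul_zero, norm_zero]
        exact Set.indicator_apply_nonneg fun _ => by positivity
      · have hzK : z ∈ K := by
          have : z - x ∈ tsupport (g k) := subset_tsupport _ hz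
          have : z = x + (z - x) := by abel
          rw [this]
          exact Set.add_mem_add hx ‹z - x ∈ tsupport (g k)›
        rw [Set.indicator_of_mem hzK]
        calc ‖f z * g k (z - x)‖ = |f z| * ‖g k (z - x)‖ := by
              rw [norm_mul]; rfl
          _ ≤ M * C := mul_le_mul (hM z) (hC _) (norm_nonneg _) hM0
    · exact (integrable_indicator_iff hKc.measurableSet).2
        (integrableOn_const hKc.measure_lt_top.ne)
    · refine Eventually.of_forall fun z => ?_
      exact (continuousAt_const.mul (((hg3 k).comp
        (continuous_const.sub continuous_id)).continuousAt))
  have hbd : ∀ (k : ℕ) x, |(∫ z, f z * ρ (z - x) ∂volume) -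
      ∫ z, f z * g k (z - x) ∂volume| ≤ M * ((k : ℝ) + 1)⁻¹ := by
    intro k x
    have hMnorm : ∀ z, ‖f z‖ ≤ M := fun z => hM z
    have hint1 : Integrable (fun z => f z * ρ (z - x)) volume :=
      (hρint.comp_sub_right x).bdd_mul hf.aestronglyMeasurable (ae_of_all _ hMnorm)
    have hint2 : Integrable (fun z => f z * g k (z - x)) volume :=
      ((hg4 k).comp_sub_right x).bdd_mul hf.aestronglyMeasurable (ae_of_all _ hMnorm)
    have hdint : Integrable (fun z => M * |ρ (z - x) - g k (z - x)|) volume :=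
      (((hρint.sub (hg4 k)).comp_sub_right x).abs.const_mul M)
    rw [← integral_sub hint1 hint2]
    calc |∫ z, (f z * ρ (z - x) - f z * g k (z - x)) ∂volume|
        ≤ ∫ z, |f z * ρ (z - x) - f z * g k (z - x)| ∂volume := by
          simpa [Real.norm_eq_abs] using
            norm_integral_le_integral_norm (fun z => f z * ρ (z - x) - f z * g k (z - x))
      _ ≤ ∫ z, M * |ρ (z - x) - g k (z - x)| ∂volume := by
          apply integral_mono (hint1.sub hint2).abs hdint
          intro z
          simp only [Pi.abs_apply, Pi.sub_apply, ← mul_sub, abs_mul]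
          exact mul_le_mul_of_nonneg_right (hM z) (abs_nonneg _)
      _ = M * ∫ z, |ρ (z - x) - g k (z - x)| ∂volume := integral_const_mul M _
      _ = M * ∫ z, |ρ z - g k z| ∂volume := by
          rw [integral_sub_right_eq_self (fun z => |ρ z - g k z|) (μ := volume) x]
      _ ≤ M * ((k : ℝ) + 1)⁻¹ := by
          refine mul_le_mul_of_nonneg_left ?_ hM0
          simpa [Real.norm_eq_abs] using hg2 k
  have hunif : TendstoUniformly (fun k x => ∫ z, f z * g k (z - x) ∂volume)
      (fun x => ∫ z, f z * ρ (z - x) ∂volume) atTop := by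
    rw [Metric.tendstoUniformly_iff]
    intro ε hε
    have hto : Tendsto (fun k : ℕ => M * ((k : ℝ) + 1)⁻¹) atTop (𝓝 0) := by
      have h1 := tendsto_one_div_add_atTop_nhds_zero_nat (𝕜 := ℝ)
      have := h1.const_mul M
      simpa [one_div] using this
    filter_upwards [hto.eventually (gt_mem_nhds hε)] with k hk x
    rw [Real.dist_eq]
    exact lt_of_le_of_lt (hbd k x) hk
  have hcont : Continuous fun x => ∫ z, f z * ρ (z - x) ∂volume :=
    hunif.continuous (Eventually.of_forall contF).frequently
  simpa only [key] using hcont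

lemma aux_null (μ : Measure (EuclideanSpace ℝ (Fin n))) [IsProbabilityMeasure μ]
    (T : EuclideanSpace ℝ (Fin n) →ₗ[ℝ] EuclideanSpace ℝ (Fin n))
    (hTdet : LinearMap.det T ≠ 0)
    (h : ∀ f : EuclideanSpace ℝ (Fin n) → ℝ, Measurable f → (∃ M : ℝ, ∀ x, |f x| ≤ M) →
        Continuous fun x => ∫ y, f (T x + y) ∂μ) :
    μ ≪ volume := by
  intro s hs0
  obtain ⟨N, hsN, hN, hN0⟩ := exists_measurable_superset_of_null hs0
  refine measure_mono_null hsN ?_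
  have hTmeas : Measurable T := T.continuous_of_finiteDimensional.measurable
  have hcont := h (N.indicator 1) (measurable_one.indicator hN)
    ⟨1, fun x => by rw [Set.indicator]; split <;> simp⟩
  have gval : ∀ x : EuclideanSpace ℝ (Fin n),
      (∫ y, N.indicator 1 (T x + y) ∂μ) = (μ {y | T x + y ∈ N}).toReal := by
    intro x
    have : (fun y => N.indicator (1 : EuclideanSpace ℝ (Fin n) → ℝ) (T x + y))
        = {y : EuclideanSpace ℝ (Fin n) | T x + y ∈ N}.indicator (fun _ => (1 : ℝ)) := by
      ext y
      by_cases hy : T x + y ∈ N <;>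
        simp [Set.indicator, hy]
    rw [this]
    simpa [Measure.real] using integral_indicator_const (μ := μ) (s := {y | T x + y ∈ N}) (1 : ℝ)
      (hN.preimage (measurable_const.add measurable_id))
  set S : Set ((EuclideanSpace ℝ (Fin n)) × (EuclideanSpace ℝ (Fin n))) :=
    {p | T p.1 + p.2 ∈ N} with hSdef
  have hS : MeasurableSet S := hN.preimage ((hTmeas.comp measurable_fst).add measurable_snd)
  have hmeas : Measurable fun x => μ (Prod.mk x ⁻¹' S) := measurable_measure_prodMk_left hS
  have hzero : ∫⁻ x, μ (Prod.mk x ⁻¹' S) ∂volume = 0 := by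
    have h1 : ∀ x : EuclideanSpace ℝ (Fin n),
        μ (Prod.mk x ⁻¹' S) = ∫⁻ y, S.indicator 1 (x, y) ∂μ := by
      intro x
      rw [← lintegral_indicator_one (hS.preimage measurable_prodMk_left)]
      refine lintegral_congr fun y => ?_
      by_cases hxy : T x + y ∈ N <;> simp [Set.indicator_apply, hSdef, Set.mem_setOf_eq, Set.mem_preimage, hxy]
    calc ∫⁻ x, μ (Prod.mk x ⁻¹' S) ∂volume
        = ∫⁻ x, ∫⁻ y, S.indicator 1 (x, y) ∂μ ∂volume := by simp_rw [h1]
      _ = ∫⁻ y, ∫⁻ x, S.indicator 1 (x, y) ∂volume ∂μ :=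
          lintegral_lintegral_swap (measurable_one.indicator hS).aemeasurable
      _ = ∫⁻ y, volume {x | T x + y ∈ N} ∂μ := by
          refine lintegral_congr fun y => ?_
          have hmy : MeasurableSet {x : EuclideanSpace ℝ (Fin n) | T x + y ∈ N} :=
            hN.preimage (hTmeas.add_const y)
          rw [← lintegral_indicator_one hmy]
          refine lintegral_congr fun x => ?_
          by_cases hxy : T x + y ∈ N <;> simp [Set.indicator_apply, hSdef, Set.mem_setOf_eq, Set.mem_preimage, hxy]
      _ = 0 := by
          have h2 : ∀ y : EuclideanSpace ℝ (Fin n), volume {x | T x + y ∈ N} = 0 := by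
            intro y
            have : {x : EuclideanSpace ℝ (Fin n) | T x + y ∈ N}
                = T ⁻¹' ((fun z => z + y) ⁻¹' N) := rfl
            rw [this, MeasureTheory.Measure.addHaar_preimage_linearMap volume hTdet,
              measure_preimage_add_right, hN0, mul_zero]
          simp [h2]
  have hae : ∀ᵐ x ∂(volume : Measure (EuclideanSpace ℝ (Fin n))),
      μ (Prod.mk x ⁻¹' S) = 0 := (lintegral_eq_zero_iff hmeas).1 hzero
  have hgae : (fun x => ∫ y, N.indicator 1 (T x + y) ∂μ)
      =ᵐ[(volume : Measure (EuclideanSpace ℝ (Fin n)))] (fun _ => (0 : ℝ)) := by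
    filter_upwards [hae] with x hx
    rw [gval x]
    have : {y | T x + y ∈ N} = Prod.mk x ⁻¹' S := rfl
    rw [this, hx, ENNReal.toReal_zero]
  have hg0 : (fun x => ∫ y, N.indicator 1 (T x + y) ∂μ) = fun _ => (0 : ℝ) :=
    (Continuous.ae_eq_iff_eq volume hcont continuous_const).1 hgae
  have := congrFun hg0 0
  rw [gval 0] at this
  have hNset : {y : EuclideanSpace ℝ (Fin n) | T 0 + y ∈ N} = N := by
    ext y; simp [map_zero]
  rw [hNset] at this
  exact (ENNReal.toReal_eq_zero_iff _).1 this |>.resolve_right (measure_ne_top μ N)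

/-- The Markov operator `P_t f (x) = ∫ f(e^{tA} x + y) μ_t(dy)` maps bounded Borel
functions to continuous functions iff `μ_t` is absolutely continuous. -/
theorem strongFeller_iff_absolutelyContinuous
    (n : ℕ) (A : Matrix (Fin n) (Fin n) ℝ) (t : ℝ)
    (μt : Measure (EuclideanSpace ℝ (Fin n))) [IsProbabilityMeasure μt] :
    (∀ f : EuclideanSpace ℝ (Fin n) → ℝ, Measurable f → (∃ M : ℝ, ∀ x, |f x| ≤ M) →
      Continuous (fun x =>
        ∫ y, f (Matrix.toEuclideanLin (NormedSpace.exp (t • A)) x + y) ∂μt)) ↔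
      μt ≪ (volume : Measure (EuclideanSpace ℝ (Fin n))) := by
  have hTdet : LinearMap.det (Matrix.toEuclideanLin (NormedSpace.exp (t • A))) ≠ 0 := by
    have hu : IsUnit (NormedSpace.exp (t • A)).det :=
      (Matrix.isUnit_iff_isUnit_det _).mp (Matrix.isUnit_exp _)
    have hdet : LinearMap.det (Matrix.toEuclideanLin (NormedSpace.exp (t • A))) =
        (NormedSpace.exp (t • A)).det := by
      rw [Matrix.toEuclideanLin_eq_toLin, LinearMap.det_toLin]
    rw [hdet]
    exact hu.ne_zero
  constructor
  · intro h
    exact aux_null μt (Matrix.toEuclideanLin (NormedSpace.exp (t • A))) hTdet h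
  · rintro hac f hf ⟨M, hM⟩
    exact (aux_cont μt hac f hf M hM).comp
      (Matrix.toEuclideanLin (NormedSpace.exp (t • A))).continuous_of_finiteDimensional
end

section
/- Let ν be a Lévy measure on ℝ^d satisfying: there exist C > 0, α ∈ (0,2), c₀ > 0 such that ∫_{{|⟨z,k⟩| ≤ 1}} ⟨z,k⟩² ν(dz) ≥ C|k|^α for all k ∈ ℝ^d with |k| ≥ c₀. Let A be an n×n matrix and B an n×d matrix satisfying the rank condition Rank[B, AB, ..., A^{n-1}B] = n. Then for every t > 0 there exist constants a_t > 0 and b_t ∈ ℝ such that for all y ∈ ℝ^n with |y| ≥ 1: ∫₀ᵗ ∫_{ℝ^d} (1 − cos⟨B* e^{s A*} y, z⟩) ν(dz) ds ≥ a_t |y|^α − b_t. -/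
open MeasureTheory Matrix RealInnerProductSpace

namespace LevyAux

lemma cos_quad_bound {x : ℝ} (hx : |x| ≤ 1) : (43/96 : ℝ) * x ^ 2 ≤ 1 - Real.cos x := by
  have h := Real.cos_bound hx
  have h2 := (abs_le.1 h).2
  have h4 : |x| ^ 4 ≤ |x| ^ 2 := pow_le_pow_of_le_one (abs_nonneg x) hx (by norm_num)
  rw [sq_abs] at h4
  nlinarith [h4, h2]

lemma kalman_vanish {n d : ℕ} (A : Matrix (Fin n) (Fin n) ℝ) (B : Matrix (Fin n) (Fin d) ℝ)
    (hrank : (Matrix.of fun (i : Fin n) (jk : Fin n × Fin d) =>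
        (A ^ (jk.1 : ℕ) * B) i jk.2).rank = n)
    {t : ℝ} (ht : 0 < t) (u : Fin n → ℝ)
    (hu : ∀ s ∈ Set.Ioo (0:ℝ) t, (Bᵀ * NormedSpace.exp (s • Aᵀ)) *ᵥ u = 0) :
    u = 0 := by
  letI : NormedRing (Matrix (Fin n) (Fin n) ℝ) := Matrix.linftyOpNormedRing
  letI : NormedAlgebra ℝ (Matrix (Fin n) (Fin n) ℝ) := Matrix.linftyOpNormedAlgebra
  have key : ∀ (k : ℕ), ∀ s ∈ Set.Ioo (0:ℝ) t,
      (Bᵀ * Aᵀ ^ k * NormedSpace.exp (s • Aᵀ)) *ᵥ u = 0 := by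
    intro k
    induction k with
    | zero => simpa using hu
    | succ k ih =>
      intro s hs
      set L : Matrix (Fin n) (Fin n) ℝ →ₗ[ℝ] (Fin d → ℝ) :=
        { toFun := fun X => (Bᵀ * Aᵀ ^ k * X) *ᵥ u
          map_add' := fun X Y => by
            simp only [Matrix.mul_add, Matrix.add_mulVec]
          map_smul' := fun r X => by
            simp only [RingHom.id_apply, Matrix.mul_smul, Matrix.smul_mulVec] } with hLdef
      have hexp : HasDerivAt (fun r : ℝ => NormedSpace.exp (r • Aᵀ))
          (Aᵀ * NormedSpace.exp (s • Aᵀ)) s := hasDerivAt_exp_smul_const' Aᵀ s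
      have hder : HasDerivAt (fun r : ℝ => L (NormedSpace.exp (r • Aᵀ)))
          (L (Aᵀ * NormedSpace.exp (s • Aᵀ))) s :=
        (L.toContinuousLinearMap.hasFDerivAt).comp_hasDerivAt s hexp
      have hzero : (fun r : ℝ => L (NormedSpace.exp (r • Aᵀ)))
          =ᶠ[nhds s] fun _ => (0 : Fin d → ℝ) := by
        filter_upwards [isOpen_Ioo.mem_nhds hs] with r hr
        simpa [hLdef] using ih r hr
      have hder0 : HasDerivAt (fun r : ℝ => L (NormedSpace.exp (r • Aᵀ)))
          (0 : Fin d → ℝ) s :=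
        (hasDerivAt_const s (0 : Fin d → ℝ)).congr_of_eventuallyEq hzero
      have hun : L (Aᵀ * NormedSpace.exp (s • Aᵀ)) = 0 := hder.unique hder0
      simpa [hLdef, pow_succ, Matrix.mul_assoc] using hun
  have hmem : t/2 ∈ Set.Ioo (0:ℝ) t := ⟨by linarith, by linarith⟩
  set u' : Fin n → ℝ := NormedSpace.exp ((t/2) • Aᵀ) *ᵥ u with hu'def
  have hk : ∀ k : ℕ, u' ᵥ* (A ^ k * B) = 0 := by
    intro k
    have h1 := key k (t/2) hmem
    rw [← Matrix.mulVec_mulVec] at h1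
    rwa [show Bᵀ * Aᵀ ^ k = (A ^ k * B)ᵀ by
      rw [Matrix.transpose_mul, Matrix.transpose_pow], Matrix.mulVec_transpose] at h1
  have hsurj : Function.Surjective (Matrix.of fun (i : Fin n) (jk : Fin n × Fin d) =>
      (A ^ (jk.1 : ℕ) * B) i jk.2).mulVecLin := by
    rw [← LinearMap.range_eq_top]
    apply Submodule.eq_top_of_finrank_eq
    rw [Module.finrank_fin_fun]
    exact hrank
  obtain ⟨w, hw⟩ := hsurj u'
  have hvm : u' ᵥ* (Matrix.of fun (i : Fin n) (jk : Fin n × Fin d) =>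
      (A ^ (jk.1 : ℕ) * B) i jk.2) = 0 := by
    funext jk
    have := congrFun (hk jk.1) jk.2
    simpa [Matrix.vecMul, dotProduct] using this
  have hz : u' ⬝ᵥ u' = 0 := by
    have hw' : (Matrix.of fun (i : Fin n) (jk : Fin n × Fin d) =>
        (A ^ (jk.1 : ℕ) * B) i jk.2) *ᵥ w = u' := hw
    calc u' ⬝ᵥ u' = u' ⬝ᵥ ((Matrix.of fun (i : Fin n) (jk : Fin n × Fin d) =>
          (A ^ (jk.1 : ℕ) * B) i jk.2) *ᵥ w) := by rw [hw']
      _ = (u' ᵥ* (Matrix.of fun (i : Fin n) (jk : Fin n × Fin d) =>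
          (A ^ (jk.1 : ℕ) * B) i jk.2)) ⬝ᵥ w := Matrix.dotProduct_mulVec _ _ _
      _ = 0 := by rw [hvm, zero_dotProduct]
  have hu0 : u' = 0 := dotProduct_self_eq_zero.mp hz
  have hinv : NormedSpace.exp (-((t/2) • Aᵀ)) * NormedSpace.exp ((t/2) • Aᵀ) = 1 := by
    rw [← Matrix.exp_add_of_commute _ _ (Commute.refl ((t/2) • Aᵀ)).neg_left]
    simp
  calc u = (1 : Matrix (Fin n) (Fin n) ℝ) *ᵥ u := (Matrix.one_mulVec u).symm
    _ = NormedSpace.exp (-((t/2) • Aᵀ)) *ᵥ u' := by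
        rw [← hinv, ← Matrix.mulVec_mulVec]
    _ = 0 := by rw [hu0, Matrix.mulVec_zero]


lemma dot_self_nonneg {m : ℕ} (v : Fin m → ℝ) : 0 ≤ v ⬝ᵥ v :=
  Finset.sum_nonneg fun i _ => mul_self_nonneg (v i)

lemma continuous_matexp {n d : ℕ} (A : Matrix (Fin n) (Fin n) ℝ) (B : Matrix (Fin n) (Fin d) ℝ) :
    Continuous fun s : ℝ => Bᵀ * NormedSpace.exp (s • Aᵀ) := by
  letI : NormedRing (Matrix (Fin n) (Fin n) ℝ) := Matrix.linftyOpNormedRing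
  letI : NormedAlgebra ℝ (Matrix (Fin n) (Fin n) ℝ) := Matrix.linftyOpNormedAlgebra
  letI : NormedAlgebra ℚ (Matrix (Fin n) (Fin n) ℝ) := Matrix.linftyOpNormedAlgebra
  exact continuous_const.matrix_mul
    (NormedSpace.exp_continuous.comp (continuous_id.smul continuous_const))

lemma quad_lower {n d : ℕ} (A : Matrix (Fin n) (Fin n) ℝ) (B : Matrix (Fin n) (Fin d) ℝ)
    (hrank : (Matrix.of fun (i : Fin n) (jk : Fin n × Fin d) =>
        (A ^ (jk.1 : ℕ) * B) i jk.2).rank = n)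
    {t : ℝ} (ht : 0 < t) :
    ∃ c : ℝ, 0 < c ∧ ∀ u : Fin n → ℝ,
      c * (u ⬝ᵥ u) ≤ ∫ s in Set.Ioc (0:ℝ) t,
        ((Bᵀ * NormedSpace.exp (s • Aᵀ)) *ᵥ u) ⬝ᵥ ((Bᵀ * NormedSpace.exp (s • Aᵀ)) *ᵥ u) := by
  set M : ℝ → Matrix (Fin d) (Fin n) ℝ := fun s => Bᵀ * NormedSpace.exp (s • Aᵀ) with hMdef
  have hMc : Continuous M := continuous_matexp A B
  -- continuity of s ↦ M s *ᵥ u and of the integrand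
  have hfc : ∀ u : Fin n → ℝ, Continuous fun s => (M s *ᵥ u) ⬝ᵥ (M s *ᵥ u) := fun u =>
    (hMc.matrix_mulVec continuous_const).dotProduct
      (hMc.matrix_mulVec continuous_const)
  have hfint : ∀ u : Fin n → ℝ,
      IntegrableOn (fun s => (M s *ᵥ u) ⬝ᵥ (M s *ᵥ u)) (Set.Ioc 0 t) volume := fun u =>
    ((hfc u).integrableOn_Icc (a := 0) (b := t)).mono_set Set.Ioc_subset_Icc_self
  -- the Gramian matrix
  set N : ℝ → Matrix (Fin n) (Fin n) ℝ := fun s => (M s)ᵀ * M s with hNdef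
  have hNc : ∀ i j, Continuous fun s => N s i j := fun i j =>
    (hMc.matrix_transpose.matrix_mul hMc).matrix_elem i j
  have hNint : ∀ i j, IntegrableOn (fun s => N s i j) (Set.Ioc 0 t) volume := fun i j =>
    ((hNc i j).integrableOn_Icc (a := 0) (b := t)).mono_set Set.Ioc_subset_Icc_self
  set Q : Matrix (Fin n) (Fin n) ℝ :=
    Matrix.of (fun i j => ∫ s in Set.Ioc (0:ℝ) t, N s i j) with hQdef
  have dot_quad : ∀ (P : Matrix (Fin d) (Fin n) ℝ) (v : Fin n → ℝ),
      (P *ᵥ v) ⬝ᵥ (P *ᵥ v) = v ⬝ᵥ ((Pᵀ * P) *ᵥ v) := by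
    intro P v
    symm
    rw [← Matrix.mulVec_mulVec, Matrix.dotProduct_mulVec, Matrix.vecMul_transpose]
  have hint : ∀ (u : Fin n → ℝ) (i j : Fin n),
      IntegrableOn (fun s => (u i * u j) * N s i j) (Set.Ioc 0 t) volume := fun u i j =>
    ((continuous_const.mul (hNc i j)).integrableOn_Icc (a := 0) (b := t)).mono_set
      Set.Ioc_subset_Icc_self
  have hpt : ∀ (u : Fin n → ℝ) (s : ℝ),
      (M s *ᵥ u) ⬝ᵥ (M s *ᵥ u) = ∑ i, ∑ j, (u i * u j) * N s i j := by
    intro u s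
    rw [dot_quad (M s) u]
    show u ⬝ᵥ (N s *ᵥ u) = _
    simp only [dotProduct, Matrix.mulVec, Finset.mul_sum]
    exact Finset.sum_congr rfl fun i _ => Finset.sum_congr rfl fun j _ => by ring
  have hQform : ∀ u : Fin n → ℝ,
      u ⬝ᵥ (Q *ᵥ u) = ∫ s in Set.Ioc (0:ℝ) t, (M s *ᵥ u) ⬝ᵥ (M s *ᵥ u) := by
    intro u
    have h1 : u ⬝ᵥ (Q *ᵥ u) = ∑ i, ∑ j, (u i * u j) * Q i j := by
      simp only [dotProduct, Matrix.mulVec, Finset.mul_sum]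
      exact Finset.sum_congr rfl fun i _ => Finset.sum_congr rfl fun j _ => by ring
    have h2 : ∀ i j : Fin n, (u i * u j) * Q i j
        = ∫ s in Set.Ioc (0:ℝ) t, (u i * u j) * N s i j := by
      intro i j
      rw [hQdef]
      exact (integral_const_mul _ _).symm
    have h3 : ∀ i : Fin n, (∑ j, ∫ s in Set.Ioc (0:ℝ) t, (u i * u j) * N s i j)
        = ∫ s in Set.Ioc (0:ℝ) t, ∑ j, (u i * u j) * N s i j := fun i =>
      (MeasureTheory.integral_finset_sum _ fun j _ => hint u i j).symm
    rw [h1]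
    simp_rw [h2, h3]
    rw [← MeasureTheory.integral_finset_sum _
      (fun i _ => MeasureTheory.integrable_finset_sum _ fun j _ => hint u i j)]
    exact integral_congr_ae (Filter.Eventually.of_forall fun s => by
      simpa using (hpt u s).symm)
  rcases Nat.eq_zero_or_pos n with hn | hn
  · refine ⟨1, one_pos, fun u => ?_⟩
    have h0 : u ⬝ᵥ u = 0 := by subst hn; simp [dotProduct]
    rw [h0, mul_zero]
    exact MeasureTheory.setIntegral_nonneg measurableSet_Ioc fun s _ => dot_self_nonneg _
  · set Sp : Set (Fin n → ℝ) := {u | u ⬝ᵥ u = 1} with hSpdef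
    have hSpc : IsCompact Sp := by
      have hcl : IsClosed Sp :=
        isClosed_eq (continuous_id.dotProduct continuous_id) continuous_const
      have hsub : Sp ⊆ Metric.closedBall 0 1 := by
        intro u hu
        rw [Metric.mem_closedBall, dist_zero_right]
        refine (pi_norm_le_iff_of_nonneg zero_le_one).2 fun i => ?_
        rw [Real.norm_eq_abs, abs_le_one_iff_mul_self_le_one]
        calc u i * u i ≤ ∑ j, u j * u j :=
              Finset.single_le_sum (f := fun j => u j * u j)
                (fun j _ => mul_self_nonneg _) (Finset.mem_univ i)
          _ = 1 := hu
      exact Metric.isCompact_of_isClosed_isBounded hcl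
        (Metric.isBounded_closedBall.subset hsub)
    have hSpne : Sp.Nonempty := by
      refine ⟨Pi.single ⟨0, hn⟩ 1,
        show Pi.single (⟨0, hn⟩ : Fin n) (1:ℝ) ⬝ᵥ Pi.single (⟨0, hn⟩ : Fin n) (1:ℝ) = 1 from ?_⟩
      simp [dotProduct, Pi.single_apply]
    have hqc : Continuous fun u : Fin n → ℝ => u ⬝ᵥ (Q *ᵥ u) :=
      continuous_id.dotProduct (continuous_const.matrix_mulVec continuous_id)
    obtain ⟨u₀, hu₀, hmin'⟩ := hSpc.exists_isMinOn hSpne hqc.continuousOn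
    have hmin : ∀ v ∈ Sp, u₀ ⬝ᵥ (Q *ᵥ u₀) ≤ v ⬝ᵥ (Q *ᵥ v) := fun v hv => hmin' hv
    have hu₀1 : u₀ ⬝ᵥ u₀ = 1 := hu₀
    have hu₀ne : u₀ ≠ 0 := by
      intro h
      rw [h] at hu₀1
      simp [zero_dotProduct] at hu₀1
    have hex : ∃ s₀ ∈ Set.Ioo (0:ℝ) t, M s₀ *ᵥ u₀ ≠ 0 := by
      by_contra h
      push_neg at h
      exact hu₀ne (kalman_vanish A B hrank ht u₀ h)
    obtain ⟨s₀, hs₀, hMs₀⟩ := hex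
    have hpos : 0 < u₀ ⬝ᵥ (Q *ᵥ u₀) := by
      rw [hQform]
      have hf0 : (0:ℝ) < (M s₀ *ᵥ u₀) ⬝ᵥ (M s₀ *ᵥ u₀) := by
        refine (dot_self_nonneg _).lt_of_ne (Ne.symm fun h => hMs₀ ?_)
        exact dotProduct_self_eq_zero.mp h
      rw [MeasureTheory.setIntegral_pos_iff_support_of_nonneg_ae
        ((ae_restrict_iff' measurableSet_Ioc).2 (ae_of_all _ fun s _ => dot_self_nonneg _))
        (hfint u₀)]
      refine lt_of_lt_of_le ?_
        (measure_mono (Set.inter_subset_inter_right _ Set.Ioo_subset_Ioc_self))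
      refine (((hfc u₀).isOpen_support).inter isOpen_Ioo).measure_pos volume ?_
      exact ⟨s₀, Function.mem_support.2 hf0.ne', hs₀⟩
    refine ⟨u₀ ⬝ᵥ (Q *ᵥ u₀), hpos, fun u => ?_⟩
    rcases eq_or_ne u 0 with rfl | hune
    · simp [Matrix.mulVec_zero, zero_dotProduct]
    · have hdpos : 0 < u ⬝ᵥ u :=
        (dot_self_nonneg u).lt_of_ne (Ne.symm fun h => hune (dotProduct_self_eq_zero.mp h))
      set r : ℝ := Real.sqrt (u ⬝ᵥ u) with hrdef
      have hr : 0 < r := Real.sqrt_pos.2 hdpos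
      have hr2 : r ^ 2 = u ⬝ᵥ u := Real.sq_sqrt hdpos.le
      set v : Fin n → ℝ := r⁻¹ • u with hvdef
      have hvS : v ∈ Sp := by
        show v ⬝ᵥ v = 1
        rw [hvdef, smul_dotProduct, dotProduct_smul, smul_eq_mul, smul_eq_mul,
          ← hr2]
        field_simp
      have huv : u = r • v := by
        rw [hvdef, smul_smul, mul_inv_cancel₀ hr.ne', one_smul]
      have hscale : ∀ s : ℝ, (M s *ᵥ u) ⬝ᵥ (M s *ᵥ u)
          = r ^ 2 * ((M s *ᵥ v) ⬝ᵥ (M s *ᵥ v)) := by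
        intro s
        rw [huv, Matrix.mulVec_smul, smul_dotProduct, dotProduct_smul,
          smul_eq_mul, smul_eq_mul]
        ring
      calc (u₀ ⬝ᵥ (Q *ᵥ u₀)) * (u ⬝ᵥ u) = (u₀ ⬝ᵥ (Q *ᵥ u₀)) * r ^ 2 := by rw [hr2]
        _ ≤ (v ⬝ᵥ (Q *ᵥ v)) * r ^ 2 :=
            mul_le_mul_of_nonneg_right (hmin v hvS) (sq_nonneg r)
        _ = ∫ s in Set.Ioc (0:ℝ) t, r ^ 2 * ((M s *ᵥ v) ⬝ᵥ (M s *ᵥ v)) := by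
            rw [hQform, mul_comm, ← integral_const_mul]
        _ = ∫ s in Set.Ioc (0:ℝ) t, (M s *ᵥ u) ⬝ᵥ (M s *ᵥ u) :=
            integral_congr_ae (Filter.Eventually.of_forall fun s => (hscale s).symm)

lemma op_bound {n d : ℕ} (A : Matrix (Fin n) (Fin n) ℝ) (B : Matrix (Fin n) (Fin d) ℝ)
    (t : ℝ) :
    ∃ Mb : ℝ, 1 ≤ Mb ∧ ∀ s ∈ Set.Ioc (0:ℝ) t, ∀ u : Fin n → ℝ,
      ((Bᵀ * NormedSpace.exp (s • Aᵀ)) *ᵥ u) ⬝ᵥ ((Bᵀ * NormedSpace.exp (s • Aᵀ)) *ᵥ u)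
        ≤ Mb * (u ⬝ᵥ u) := by
  set M : ℝ → Matrix (Fin d) (Fin n) ℝ := fun s => Bᵀ * NormedSpace.exp (s • Aᵀ) with hMdef
  have hMc : Continuous M := continuous_matexp A B
  set φ : ℝ → ℝ := fun s => ∑ i, ∑ j, (M s i j) ^ 2 with hφdef
  have hφc : Continuous φ := by
    apply continuous_finset_sum
    intro i _
    apply continuous_finset_sum
    intro j _
    exact (hMc.matrix_elem i j).pow 2
  obtain ⟨E, hE⟩ :=
    (isCompact_Icc (a := (0:ℝ)) (b := t)).exists_bound_of_continuousOn hφc.continuousOn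
  refine ⟨max E 1, le_max_right _ _, fun s hs u => ?_⟩
  have hφb : φ s ≤ max E 1 :=
    le_trans (le_trans (le_abs_self _) (hE s (Set.Ioc_subset_Icc_self hs))) (le_max_left _ _)
  have h1 : (M s *ᵥ u) ⬝ᵥ (M s *ᵥ u) = ∑ i, ((M s *ᵥ u) i) ^ 2 := by
    simp [dotProduct, sq]
  have h2 : ∀ i, ((M s *ᵥ u) i) ^ 2 ≤ (∑ j, (M s i j) ^ 2) * (∑ j, (u j) ^ 2) := by
    intro i
    have hx : (M s *ᵥ u) i = ∑ j, M s i j * u j := rfl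
    rw [hx]
    exact Finset.sum_mul_sq_le_sq_mul_sq _ _ _
  have h3 : u ⬝ᵥ u = ∑ j, (u j) ^ 2 := by simp [dotProduct, sq]
  calc (M s *ᵥ u) ⬝ᵥ (M s *ᵥ u) = ∑ i, ((M s *ᵥ u) i) ^ 2 := h1
    _ ≤ ∑ i, (∑ j, (M s i j) ^ 2) * (∑ j, (u j) ^ 2) := Finset.sum_le_sum fun i _ => h2 i
    _ = φ s * (u ⬝ᵥ u) := by rw [hφdef, Finset.sum_mul, h3]
    _ ≤ max E 1 * (u ⬝ᵥ u) := mul_le_mul_of_nonneg_right hφb (dot_self_nonneg u)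

open RealInnerProductSpace in
lemma inner_int_bound {d : ℕ} (ν : Measure (EuclideanSpace ℝ (Fin d)))
    {C α c₀ : ℝ} (hC : 0 < C) (hα : α ∈ Set.Ioo (0:ℝ) 2) (hc₀ : 0 < c₀)
    (hcond : ∀ k : EuclideanSpace ℝ (Fin d), c₀ ≤ ‖k‖ →
      ENNReal.ofReal (C * ‖k‖ ^ α) ≤
        ∫⁻ z in {z | |⟪z, k⟫| ≤ 1}, ENNReal.ofReal (⟪z, k⟫ ^ 2) ∂ν)
    (k : EuclideanSpace ℝ (Fin d)) (hk : c₀ ≤ ‖k‖) :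
    ENNReal.ofReal ((43/96) * (C * ‖k‖ ^ α)) ≤
      ∫⁻ z, ENNReal.ofReal (1 - Real.cos ⟪k, z⟫) ∂ν := by
  set S : Set (EuclideanSpace ℝ (Fin d)) := {z | |⟪z, k⟫| ≤ 1} with hS
  have hmeas : MeasurableSet S := by
    have hco : Continuous fun z : EuclideanSpace ℝ (Fin d) => |⟪z, k⟫| :=
      (continuous_id.inner continuous_const).abs
    exact (isClosed_le hco continuous_const).measurableSet
  calc ENNReal.ofReal ((43/96) * (C * ‖k‖ ^ α))
      = ENNReal.ofReal (43/96) * ENNReal.ofReal (C * ‖k‖ ^ α) := by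
        rw [← ENNReal.ofReal_mul (by norm_num)]
    _ ≤ ENNReal.ofReal (43/96) * ∫⁻ z in S, ENNReal.ofReal (⟪z, k⟫ ^ 2) ∂ν :=
        mul_le_mul_right (hcond k hk) _
    _ = ∫⁻ z in S, ENNReal.ofReal (43/96) * ENNReal.ofReal (⟪z, k⟫ ^ 2) ∂ν :=
        (lintegral_const_mul' _ _ (by simp)).symm
    _ = ∫⁻ z in S, ENNReal.ofReal ((43/96) * ⟪z, k⟫ ^ 2) ∂ν := by
        refine lintegral_congr fun z => ?_
        rw [← ENNReal.ofReal_mul (by norm_num)]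
    _ ≤ ∫⁻ z in S, ENNReal.ofReal (1 - Real.cos ⟪k, z⟫) ∂ν := by
        refine setLIntegral_mono' hmeas fun z hz => ?_
        refine ENNReal.ofReal_le_ofReal ?_
        have h2 : ⟪z, k⟫ = ⟪k, z⟫ := real_inner_comm k z
        rw [h2]
        exact cos_quad_bound (h2 ▸ hz)
    _ ≤ ∫⁻ z, ENNReal.ofReal (1 - Real.cos ⟪k, z⟫) ∂ν := setLIntegral_le_lintegral _ _

end LevyAux

/-- Under the nondegeneracy condition on the Lévy measure and the Kalman rank condition,
for each `t > 0` there are `a_t > 0` and `b_t ∈ ℝ` with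
`∫₀ᵗ ∫ (1 − cos⟨B*e^{sA*}y, z⟩) ν(dz) ds ≥ a_t |y|^α − b_t` for all `|y| ≥ 1`. -/
theorem lower_bound_for_levy_symbol
    (n d : ℕ) (ν : Measure (EuclideanSpace ℝ (Fin d)))
    (hν0 : ν {0} = 0)
    (hν2 : ∫⁻ y, ENNReal.ofReal (min 1 (‖y‖ ^ 2)) ∂ν < ⊤)
    (C : ℝ) (hC : 0 < C) (α : ℝ) (hα : α ∈ Set.Ioo (0:ℝ) 2)
    (c₀ : ℝ) (hc₀ : 0 < c₀)
    (hcond : ∀ k : EuclideanSpace ℝ (Fin d), c₀ ≤ ‖k‖ →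
      ENNReal.ofReal (C * ‖k‖ ^ α) ≤
        ∫⁻ z in {z | |⟪z, k⟫| ≤ 1}, ENNReal.ofReal (⟪z, k⟫ ^ 2) ∂ν)
    (A : Matrix (Fin n) (Fin n) ℝ) (B : Matrix (Fin n) (Fin d) ℝ)
    (hrank : (Matrix.of fun (i : Fin n) (jk : Fin n × Fin d) =>
        (A ^ (jk.1 : ℕ) * B) i jk.2).rank = n) :
    ∀ t : ℝ, 0 < t → ∃ a b : ℝ, 0 < a ∧
      ∀ y : EuclideanSpace ℝ (Fin n), 1 ≤ ‖y‖ →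
        ENNReal.ofReal (a * ‖y‖ ^ α - b) ≤
          ∫⁻ s in Set.Ioc (0:ℝ) t,
            ∫⁻ z, ENNReal.ofReal
              (1 - Real.cos ⟪Matrix.toEuclideanLin (Bᵀ * NormedSpace.exp (s • Aᵀ)) y, z⟫)
              ∂ν := by
  intro t ht
  obtain ⟨c, hc, hquad⟩ := LevyAux.quad_lower A B hrank ht
  obtain ⟨Mb, hMb1, hMb⟩ := LevyAux.op_bound A B t
  have hMb0 : (0:ℝ) < Mb := lt_of_lt_of_le one_pos hMb1
  set κ : ℝ := Real.sqrt Mb with hκdef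
  have hκ1 : (1:ℝ) ≤ κ := by
    rw [hκdef, show (1:ℝ) = Real.sqrt 1 from Real.sqrt_one.symm]
    exact Real.sqrt_le_sqrt hMb1
  have hκ0 : (0:ℝ) < κ := lt_of_lt_of_le one_pos hκ1
  have hrp : (0:ℝ) < κ ^ (α - 2) := Real.rpow_pos_of_pos hκ0 _
  refine ⟨(43/96 : ℝ) * C * (c * κ ^ (α - 2)), (43/96 : ℝ) * C * (t * c₀ ^ α),
    by positivity, ?_⟩
  intro y hy
  have hy0 : (0:ℝ) < ‖y‖ := lt_of_lt_of_le one_pos hy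
  set M : ℝ → Matrix (Fin d) (Fin n) ℝ := fun s => Bᵀ * NormedSpace.exp (s • Aᵀ) with hMdef
  set yf : Fin n → ℝ := (WithLp.equiv 2 (Fin n → ℝ)) y with hyfdef
  set k : ℝ → EuclideanSpace ℝ (Fin d) := fun s => Matrix.toEuclideanLin (M s) y with hkdef
  have hnorm_sq : ∀ s, ‖k s‖ ^ 2 = (M s *ᵥ yf) ⬝ᵥ (M s *ᵥ yf) := by
    intro s
    rw [← real_inner_self_eq_norm_sq]
    simp [hkdef, Matrix.toEuclideanLin_apply, PiLp.inner_apply, RCLike.inner_apply,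
      dotProduct]
    rw [EuclideanSpace.norm_sq_eq]
    simp [hyfdef, sq]
  have hy_sq : ‖y‖ ^ 2 = yf ⬝ᵥ yf := by
    rw [← real_inner_self_eq_norm_sq]
    simp [hyfdef, PiLp.inner_apply, RCLike.inner_apply, dotProduct]
    rw [EuclideanSpace.norm_sq_eq]
    simp [sq]
  have hMc : Continuous M := LevyAux.continuous_matexp A B
  have hnkc : Continuous fun s => ‖k s‖ := by
    have h1 : Continuous fun s => (M s *ᵥ yf) ⬝ᵥ (M s *ᵥ yf) :=
      (hMc.matrix_mulVec continuous_const).dotProduct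
        (hMc.matrix_mulVec continuous_const)
    have h2 : (fun s => ‖k s‖) = fun s => Real.sqrt ((M s *ᵥ yf) ⬝ᵥ (M s *ᵥ yf)) := by
      funext s
      rw [← hnorm_sq s, Real.sqrt_sq (norm_nonneg _)]
    rw [h2]
    exact Real.continuous_sqrt.comp h1
  have hnka : Continuous fun s => ‖k s‖ ^ α := hnkc.rpow_const fun s => Or.inr hα.1.le
  have int_nka : IntegrableOn (fun s => ‖k s‖ ^ α) (Set.Ioc 0 t) volume :=
    (hnka.integrableOn_Icc (a := 0) (b := t)).mono_set Set.Ioc_subset_Icc_self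
  set R : ℝ := κ * ‖y‖ with hRdef
  have hR1 : (1:ℝ) ≤ R := by nlinarith
  have hR0 : (0:ℝ) < R := lt_of_lt_of_le one_pos hR1
  have hbound : ∀ s ∈ Set.Ioc (0:ℝ) t, ‖k s‖ ≤ R := by
    intro s hs
    have h2 : ‖k s‖ ^ 2 ≤ R ^ 2 := by
      rw [hRdef, mul_pow, hκdef, Real.sq_sqrt hMb0.le, hy_sq, hnorm_sq]
      exact hMb s hs yf
    calc ‖k s‖ = Real.sqrt (‖k s‖ ^ 2) := (Real.sqrt_sq (norm_nonneg _)).symm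
      _ ≤ Real.sqrt (R ^ 2) := Real.sqrt_le_sqrt h2
      _ = R := Real.sqrt_sq hR0.le
  have hptα : ∀ s ∈ Set.Ioc (0:ℝ) t, ‖k s‖ ^ 2 * R ^ (α - 2) ≤ ‖k s‖ ^ α := by
    intro s hs
    rcases eq_or_lt_of_le (norm_nonneg (k s)) with h0 | h0
    · rw [← h0, Real.zero_rpow hα.1.ne']
      simp
    · have e1 : ‖k s‖ ^ α = ‖k s‖ ^ 2 * ‖k s‖ ^ (α - 2) := by
        have e2 : ‖k s‖ ^ (2:ℝ) * ‖k s‖ ^ (α - 2) = ‖k s‖ ^ α := by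
          rw [← Real.rpow_add h0]
          norm_num
        rw [← e2]
        congr 1
        rw [← Real.rpow_natCast ‖k s‖ 2]
        norm_num
      rw [e1]
      exact mul_le_mul_of_nonneg_left
        (Real.rpow_le_rpow_of_nonpos h0 (hbound s hs) (by linarith [hα.2])) (sq_nonneg _)
  have hquad' : c * ‖y‖ ^ 2 ≤ ∫ s in Set.Ioc (0:ℝ) t, ‖k s‖ ^ 2 := by
    rw [hy_sq]
    refine le_trans (hquad yf) (le_of_eq ?_)
    exact integral_congr_ae (Filter.Eventually.of_forall fun s => (hnorm_sq s).symm)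
  have int_nk2R : IntegrableOn (fun s => ‖k s‖ ^ 2 * R ^ (α - 2)) (Set.Ioc 0 t) volume :=
    (((hnkc.pow 2).mul continuous_const).integrableOn_Icc (a := 0) (b := t)).mono_set
      Set.Ioc_subset_Icc_self
  have int_nk2 : IntegrableOn (fun s => ‖k s‖ ^ 2) (Set.Ioc 0 t) volume :=
    ((hnkc.pow 2).integrableOn_Icc (a := 0) (b := t)).mono_set Set.Ioc_subset_Icc_self
  have hmain : c * κ ^ (α - 2) * ‖y‖ ^ α ≤ ∫ s in Set.Ioc (0:ℝ) t, ‖k s‖ ^ α := by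
    have h1 : (∫ s in Set.Ioc (0:ℝ) t, ‖k s‖ ^ 2) * R ^ (α - 2)
        ≤ ∫ s in Set.Ioc (0:ℝ) t, ‖k s‖ ^ α := by
      rw [← integral_mul_const]
      exact setIntegral_mono_on int_nk2R int_nka measurableSet_Ioc hptα
    have h2 : c * ‖y‖ ^ 2 * R ^ (α - 2)
        ≤ (∫ s in Set.Ioc (0:ℝ) t, ‖k s‖ ^ 2) * R ^ (α - 2) :=
      mul_le_mul_of_nonneg_right hquad' (Real.rpow_nonneg hR0.le _)
    refine le_trans (le_of_eq ?_) (h2.trans h1)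
    rw [hRdef, Real.mul_rpow hκ0.le (norm_nonneg y)]
    have e3 : ‖y‖ ^ 2 * ‖y‖ ^ (α - 2) = ‖y‖ ^ α := by
      have e4 : ‖y‖ ^ (2:ℝ) * ‖y‖ ^ (α - 2) = ‖y‖ ^ α := by
        rw [← Real.rpow_add hy0]
        norm_num
      rw [← e4]
      congr 1
      rw [← Real.rpow_natCast ‖y‖ 2]
      norm_num
    rw [← e3]
    ring
  set g : ℝ → ℝ := fun s => (43/96 : ℝ) * C * (‖k s‖ ^ α - c₀ ^ α) with hgdef
  have hgpt : ∀ s ∈ Set.Ioc (0:ℝ) t, ENNReal.ofReal (g s) ≤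
      ∫⁻ z, ENNReal.ofReal (1 - Real.cos ⟪k s, z⟫) ∂ν := by
    intro s hs
    rcases le_or_gt c₀ ‖k s‖ with hcs | hcs
    · refine le_trans (ENNReal.ofReal_le_ofReal ?_)
        (LevyAux.inner_int_bound ν hC hα hc₀ hcond (k s) hcs)
      have hnn : (0:ℝ) ≤ (43/96 : ℝ) * C * c₀ ^ α := by positivity
      rw [hgdef]
      simp only
      nlinarith
    · have hle : g s ≤ 0 := by
        have h5 : ‖k s‖ ^ α ≤ c₀ ^ α := Real.rpow_le_rpow (norm_nonneg _) hcs.le hα.1.le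
        rw [hgdef]
        simp only
        apply mul_nonpos_of_nonneg_of_nonpos (by positivity)
        linarith
      rw [ENNReal.ofReal_eq_zero.2 hle]
      exact zero_le
  have hgc : Continuous g := continuous_const.mul (hnka.sub continuous_const)
  have hgint : IntegrableOn g (Set.Ioc 0 t) volume :=
    (hgc.integrableOn_Icc (a := 0) (b := t)).mono_set Set.Ioc_subset_Icc_self
  set gp : ℝ → ℝ := fun s => max (g s) 0 with hgpdef
  have hgpint : IntegrableOn gp (Set.Ioc 0 t) volume :=
    ((hgc.max continuous_const).integrableOn_Icc (a := 0) (b := t)).mono_set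
      Set.Ioc_subset_Icc_self
  have hofreal_max : ∀ x : ℝ, ENNReal.ofReal (max x 0) = ENNReal.ofReal x := by
    intro x
    rcases le_total x 0 with h | h
    · rw [max_eq_right h, ENNReal.ofReal_eq_zero.2 h, ENNReal.ofReal_zero]
    · rw [max_eq_left h]
  have hI : (∫ s in Set.Ioc (0:ℝ) t, g s)
      = (43/96 : ℝ) * C * ((∫ s in Set.Ioc (0:ℝ) t, ‖k s‖ ^ α) - t * c₀ ^ α) := by
    rw [hgdef]
    rw [integral_const_mul]
    congr 1
    have hconst : IntegrableOn (fun _ : ℝ => c₀ ^ α) (Set.Ioc 0 t) volume := by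
      apply integrableOn_const
      rw [Real.volume_Ioc]
      exact ENNReal.ofReal_ne_top
      simp
    rw [integral_sub int_nka hconst, setIntegral_const]
    rw [Real.volume_real_Ioc_of_le ht.le, smul_eq_mul]
    ring_nf
  calc ENNReal.ofReal ((43/96 : ℝ) * C * (c * κ ^ (α - 2)) * ‖y‖ ^ α
        - (43/96 : ℝ) * C * (t * c₀ ^ α))
      ≤ ENNReal.ofReal (∫ s in Set.Ioc (0:ℝ) t, gp s) := by
        apply ENNReal.ofReal_le_ofReal
        have hgle : (∫ s in Set.Ioc (0:ℝ) t, g s) ≤ ∫ s in Set.Ioc (0:ℝ) t, gp s :=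
          integral_mono hgint hgpint fun s => le_max_left _ _
        have hstep : (43/96 : ℝ) * C * (c * κ ^ (α - 2)) * ‖y‖ ^ α
            - (43/96 : ℝ) * C * (t * c₀ ^ α)
            ≤ (43/96 : ℝ) * C * ((∫ s in Set.Ioc (0:ℝ) t, ‖k s‖ ^ α) - t * c₀ ^ α) := by
          nlinarith [hmain, hC]
        exact le_trans hstep (le_trans (le_of_eq hI.symm) hgle)
    _ = ∫⁻ s in Set.Ioc (0:ℝ) t, ENNReal.ofReal (gp s) :=
        MeasureTheory.ofReal_integral_eq_lintegral_ofReal hgpint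
          (ae_of_all _ fun s => le_max_right _ _)
    _ = ∫⁻ s in Set.Ioc (0:ℝ) t, ENNReal.ofReal (g s) :=
        lintegral_congr fun s => hofreal_max _
    _ ≤ ∫⁻ s in Set.Ioc (0:ℝ) t,
          ∫⁻ z, ENNReal.ofReal
            (1 - Real.cos ⟪Matrix.toEuclideanLin (M s) y, z⟫) ∂ν :=
        setLIntegral_mono' measurableSet_Ioc fun s hs => hgpt s hs
end
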